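/- arXiv:1402.0643 — 6 statements merged into one kernel-verified Lean document; each statement's English description precedes it below -/
import Mathlib

section
/- Let K be a field, (x, y_1, ..., y_s) a point in K^{s+1}, and R_1, ..., R_s polynomials in K[X] with R_j(x) = y_j for all j. Then for any polynomial Q in K[X, Y_1, ..., Y_s] and positive integer m, the point (x, y_1,...,y_s) is a zero of Q of multiplicity at least m (i.e., Q(X+x, Y_1+y_1,...,Y_s+y_s) has no monomial of total degree less than m) if and only if for every multi-index i ∈ ℤ_{≥0}^s with |i| < m, the polynomial Q^{[i]}(X, R_1, ..., R_s) is divisible by (X - x)^{m - |i|}, where Q^{[i]} denotes the order-i Hasse derivative of Q with respect to the variables Y_1,...,Y_s. -/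
open MvPolynomial Polynomial Finset


/-- The order-`i` Hasse derivative with respect to the variables `Y_1,...,Y_s`
of `Q = Σ_j Q_j(X) Y^j`, namely `Σ_{j ≥ i} binom(j,i) Q_j(X) Y^{j-i}`. -/
noncomputable def mvHasseDeriv {R : Type*} [CommSemiring R] {σ : Type*} (i : σ →₀ ℕ)
    (P : MvPolynomial σ R) : MvPolynomial σ R :=
  ∑ j ∈ P.support, (fun j c =>
    if i ≤ j then
      (∏ k ∈ i.support, Nat.choose (j k) (i k)) • MvPolynomial.monomial (j - i) c
    else 0) j (P.coeff j)

section Lemmas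

variable {R : Type*} [CommSemiring R] {s : ℕ}

/-- componentwise binomial coefficient, over all of `Fin s`. -/
def binomF {s : ℕ} (i j : Fin s →₀ ℕ) : ℕ := ∏ k, (j k).choose (i k)

lemma binom_support (i j : Fin s →₀ ℕ) :
    (∏ k ∈ i.support, (j k).choose (i k)) = binomF i j := by
  unfold binomF
  apply Finset.prod_subset (Finset.subset_univ _)
  intro k _ hk
  simp [Finsupp.notMem_support_iff.mp hk]

lemma mvHasseDeriv_eq (i : Fin s →₀ ℕ) (P : MvPolynomial (Fin s) R) :
    mvHasseDeriv i P = ∑ j ∈ P.support,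
      (if i ≤ j then binomF i j • MvPolynomial.monomial (j - i) (MvPolynomial.coeff j P)
       else 0) := by
  rw [mvHasseDeriv]
  apply Finset.sum_congr rfl
  intro j _
  simp only [binom_support]

lemma mvHasseDeriv_coeff (i t : Fin s →₀ ℕ) (P : MvPolynomial (Fin s) R) :
    MvPolynomial.coeff t (mvHasseDeriv i P)
      = binomF i (t + i) • MvPolynomial.coeff (t + i) P := by
  rw [mvHasseDeriv_eq, MvPolynomial.coeff_sum]
  rw [Finset.sum_eq_single (t + i)]
  · rw [if_pos le_add_self, MvPolynomial.coeff_smul, add_tsub_cancel_right,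
      MvPolynomial.coeff_monomial, if_pos rfl]
  · intro j _ hne
    split
    · rename_i hle
      rw [MvPolynomial.coeff_smul, MvPolynomial.coeff_monomial, if_neg, smul_zero]
      intro h
      exact hne (by rw [← tsub_add_cancel_of_le hle, h])
    · simp
  · intro h
    rw [MvPolynomial.notMem_support_iff.mp h]
    simp

lemma trinom (a b c : ℕ) :
    (a + b).choose b * (a + b + c).choose c
      = (b + c).choose c * (a + b + c).choose (b + c) := by
  have h1 : (a + b).choose b * b.factorial * a.factorial = (a + b).factorial := by
    have := Nat.choose_mul_factorial_mul_factorial (Nat.le_add_left b a)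
    simpa using this
  have h2 : (a + b + c).choose c * c.factorial * (a + b).factorial
      = (a + b + c).factorial := by
    have := Nat.choose_mul_factorial_mul_factorial (Nat.le_add_left c (a + b))
    simpa using this
  have h3 : (b + c).choose c * c.factorial * b.factorial = (b + c).factorial := by
    have := Nat.choose_mul_factorial_mul_factorial (Nat.le_add_left c b)
    simpa using this
  have h4 : (a + b + c).choose (b + c) * (b + c).factorial * a.factorial
      = (a + b + c).factorial := by
    have := Nat.choose_mul_factorial_mul_factorial
      (show b + c ≤ a + b + c by omega)
    have he : a + b + c - (b + c) = a := by omega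
    rw [he] at this
    exact this
  have key1 : (a + b).choose b * (a + b + c).choose c
      * (a.factorial * b.factorial * c.factorial) = (a + b + c).factorial := by
    rw [← h2, ← h1]; ring
  have key2 : (b + c).choose c * (a + b + c).choose (b + c)
      * (a.factorial * b.factorial * c.factorial) = (a + b + c).factorial := by
    rw [← h4, ← h3]; ring
  apply Nat.eq_of_mul_eq_mul_right
    (show 0 < a.factorial * b.factorial * c.factorial by positivity)
  rw [key1, key2]

lemma mvHasseDeriv_comp (t i : Fin s →₀ ℕ) (P : MvPolynomial (Fin s) R) :
    mvHasseDeriv t (mvHasseDeriv i P) = binomF i (t + i) • mvHasseDeriv (t + i) P := by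
  ext u
  rw [MvPolynomial.coeff_smul, mvHasseDeriv_coeff, mvHasseDeriv_coeff, mvHasseDeriv_coeff,
    smul_smul, smul_smul, add_assoc]
  congr 1
  unfold binomF
  rw [← Finset.prod_mul_distrib, ← Finset.prod_mul_distrib]
  apply Finset.prod_congr rfl
  intro k _
  simp only [Finsupp.add_apply]
  have h := trinom (u k) (t k) (i k)
  simp only [← add_assoc] at h ⊢
  omega
lemma mvCoeff_X_add_C_pow (k : Fin s) (a : R) (n : ℕ) (u : Fin s →₀ ℕ) :
    MvPolynomial.coeff u ((MvPolynomial.X k + MvPolynomial.C a) ^ n)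
      = if u = Finsupp.single k (u k) ∧ u k ≤ n
        then n.choose (u k) • a ^ (n - u k) else 0 := by
  induction n generalizing u with
  | zero =>
    rw [pow_zero, MvPolynomial.coeff_one]
    by_cases hu : u = 0
    · subst hu; simp
    · rw [if_neg (fun h => hu h.symm), if_neg]
      rintro ⟨h1, h2⟩
      exact hu (by rw [h1, Nat.le_zero.mp h2, Finsupp.single_zero])
  | succ n ih =>
    rw [pow_succ, mul_add, MvPolynomial.coeff_add, MvPolynomial.coeff_mul_X',
      mul_comm _ (MvPolynomial.C a), MvPolynomial.coeff_C_mul, ih u]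
    by_cases hk : k ∈ u.support
    · have hpos : 0 < u k := Nat.pos_of_ne_zero (Finsupp.mem_support_iff.mp hk)
      rw [if_pos hk, ih]
      have hs1 : ((u - Finsupp.single k 1 : Fin s →₀ ℕ)) k = u k - 1 := by
        simp [Finsupp.tsub_apply]
      have hs2 : ∀ l, l ≠ k → ((u - Finsupp.single k 1 : Fin s →₀ ℕ)) l = u l := by
        intro l hl
        simp [Finsupp.tsub_apply, Finsupp.single_eq_of_ne' (Ne.symm hl)]
      rw [hs1]
      by_cases hu : u = Finsupp.single k (u k)
      · have hshape : u - Finsupp.single k 1 = Finsupp.single k (u k - 1) := by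
          ext l
          by_cases hl : l = k
          · subst hl; rw [hs1, Finsupp.single_eq_same]
          · rw [hs2 l hl, Finsupp.single_eq_of_ne' (Ne.symm hl)]
            conv_lhs => rw [hu]
            rw [Finsupp.single_eq_of_ne' (Ne.symm hl)]
        obtain ⟨e, he⟩ : ∃ e, u k = e + 1 := ⟨u k - 1, by omega⟩
        rw [he] at hshape hu ⊢
        simp only [Nat.add_sub_cancel] at hshape ⊢
        rcases Nat.lt_or_ge e n with hen | hen
        · rw [if_pos ⟨hshape, by omega⟩, if_pos ⟨hu, by omega⟩, if_pos ⟨hu, by omega⟩]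
          have h2 : n + 1 - (e + 1) = n - e := by omega
          have h4 : n - e = (n - (e + 1)) + 1 := by omega
          rw [h2, h4, Nat.choose_succ_succ' n e, add_smul, mul_smul_comm, ← pow_succ']
        · by_cases hen2 : e = n
          · subst hen2
            rw [if_pos ⟨hshape, le_refl _⟩, if_neg (by rintro ⟨-, h⟩; omega),
              if_pos ⟨hu, by omega⟩]
            simp
          · rw [if_neg (by rintro ⟨-, h⟩; omega), if_neg (by rintro ⟨-, h⟩; omega),
              if_neg (by rintro ⟨-, h⟩; omega)]
            simp
      · have hshape : ¬ (u - Finsupp.single k 1 = Finsupp.single k (u k - 1)) := by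
          intro hA
          apply hu
          ext l
          by_cases hl : l = k
          · subst hl; exact Finsupp.single_eq_same.symm
          · rw [Finsupp.single_eq_of_ne' (Ne.symm hl)]
            have := hs2 l hl
            rw [hA, Finsupp.single_eq_of_ne' (Ne.symm hl)] at this
            omega
        rw [if_neg (fun h => hshape h.1), if_neg (fun h => hu h.1),
          if_neg (fun h => hu h.1)]
        simp
    · have hzero : u k = 0 := by
        by_contra hne
        exact hk (Finsupp.mem_support_iff.mpr hne)
      rw [if_neg hk, hzero]
      simp only [Nat.choose_zero_right, one_smul, Nat.sub_zero, Nat.le_zero_eq,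
        Nat.zero_le, and_true, zero_add]
      by_cases hu : u = Finsupp.single k 0
      · rw [if_pos hu, if_pos hu, pow_succ, mul_comm]
      · rw [if_neg hu, if_neg hu, mul_zero]
lemma coeff_single_mul (k : Fin s) (V W : MvPolynomial (Fin s) R)
    (hV : ∀ v : Fin s →₀ ℕ, v ≠ Finsupp.single k (v k) → MvPolynomial.coeff v V = 0)
    (hW : ∀ w ∈ W.support, w k = 0) (u : Fin s →₀ ℕ) :
    MvPolynomial.coeff u (V * W)
      = MvPolynomial.coeff (Finsupp.single k (u k)) V
        * MvPolynomial.coeff (u.erase k) W := by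
  rw [MvPolynomial.coeff_mul]
  apply Finset.sum_eq_single_of_mem (Finsupp.single k (u k), u.erase k)
  · exact Finset.HasAntidiagonal.mem_antidiagonal.mpr (Finsupp.single_add_erase k u)
  · rintro ⟨p, q⟩ hmem hne
    rw [Finset.HasAntidiagonal.mem_antidiagonal] at hmem
    by_cases hq : q ∈ W.support
    · have hqk : q k = 0 := hW q hq
      by_cases hp : p = Finsupp.single k (p k)
      · exfalso
        apply hne
        have hpk : p k = u k := by
          have : p k + q k = u k := by rw [← hmem]; rfl
          omega
        have hq' : q = u.erase k := by
          ext l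
          by_cases hl : l = k
          · subst hl; rw [hqk, Finsupp.erase_same]
          · rw [Finsupp.erase_ne hl]
            have h1 : p l + q l = u l := by rw [← hmem]; rfl
            have h2 : p l = 0 := by
              rw [hp, Finsupp.single_eq_of_ne' (fun h => hl (h.symm))]
            omega
        have hp' : p = Finsupp.single k (u k) := by rw [hp, hpk]
        exact Prod.ext hp' hq'
      · rw [hV p hp, zero_mul]
    · rw [MvPolynomial.notMem_support_iff.mp hq, mul_zero]

lemma coeff_prod_X_add_C (a : Fin s → R) (j t : Fin s →₀ ℕ) :
    MvPolynomial.coeff t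
        (∏ k ∈ j.support, (MvPolynomial.X k + MvPolynomial.C (a k)) ^ (j k))
      = if t ≤ j then binomF t j • ∏ k, (a k) ^ ((j - t) k) else 0 := by
  induction j using Finsupp.induction generalizing t with
  | zero =>
    by_cases ht : t = 0
    · subst ht
      simp [binomF, MvPolynomial.coeff_one]
    · rw [Finsupp.support_zero, Finset.prod_empty, MvPolynomial.coeff_one,
        if_neg (fun h => ht h.symm), if_neg (fun h => ht (nonpos_iff_eq_zero.mp h))]
  | single_add k n g hkg hn ih =>
    have hgk : g k = 0 := Finsupp.notMem_support_iff.mp hkg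
    have hsupp : (Finsupp.single k n + g).support = insert k g.support := by
      rw [Finsupp.support_add_eq, Finsupp.support_single_ne_zero k hn,
        Finset.insert_eq]
      rw [Finsupp.support_single_ne_zero k hn]
      simp only [Finset.disjoint_singleton_left]
      exact hkg
    rw [hsupp, Finset.prod_insert hkg]
    have hexp : ∀ l ∈ g.support,
        (MvPolynomial.X l + MvPolynomial.C (a l)) ^ ((Finsupp.single k n + g) l)
          = (MvPolynomial.X l + MvPolynomial.C (a l)) ^ (g l) := by
      intro l hl
      rw [Finsupp.add_apply, Finsupp.single_eq_of_ne' (fun h => hkg (by rw [h]; exact hl)), zero_add]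
    have hexpk : (Finsupp.single k n + g) k = n := by
      rw [Finsupp.add_apply, Finsupp.single_eq_same, hgk]
      omega
    rw [Finset.prod_congr rfl hexp, hexpk]
    have hW : ∀ w ∈ (∏ l ∈ g.support,
        (MvPolynomial.X l + MvPolynomial.C (a l)) ^ (g l)).support, w k = 0 := by
      intro w hw
      by_contra hne
      have h0 : ¬ w ≤ g := fun h => hne (by have := (Finsupp.le_def.mp h) k; omega)
      have := MvPolynomial.mem_support_iff.mp hw
      rw [ih w, if_neg h0] at this
      exact this rfl
    have hV : ∀ v : Fin s →₀ ℕ, v ≠ Finsupp.single k (v k) →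
        MvPolynomial.coeff v ((MvPolynomial.X k + MvPolynomial.C (a k)) ^ n) = 0 := by
      intro v hv
      rw [mvCoeff_X_add_C_pow, if_neg (fun h => hv h.1)]
    rw [coeff_single_mul k _ _ hV hW, mvCoeff_X_add_C_pow, ih]
    simp only [Finsupp.single_eq_same, true_and, eq_self_iff_true]
    have hcond : t ≤ Finsupp.single k n + g ↔ t k ≤ n ∧ t.erase k ≤ g := by
      constructor
      · intro h
        refine ⟨?_, ?_⟩
        · have := (Finsupp.le_def.mp h) k
          rw [Finsupp.add_apply, Finsupp.single_eq_same, hgk] at this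
          omega
        · rw [Finsupp.le_def]
          intro l
          by_cases hl : l = k
          · subst hl; rw [Finsupp.erase_same]; exact Nat.zero_le _
          · rw [Finsupp.erase_ne hl]
            have := (Finsupp.le_def.mp h) l
            rwa [Finsupp.add_apply, Finsupp.single_eq_of_ne' (fun h' => hl h'.symm),
              zero_add] at this
      · rintro ⟨h1, h2⟩
        rw [Finsupp.le_def]
        intro l
        by_cases hl : l = k
        · subst hl
          rw [Finsupp.add_apply, Finsupp.single_eq_same, hgk]
          omega
        · rw [Finsupp.add_apply, Finsupp.single_eq_of_ne' (fun h' => hl h'.symm),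
            zero_add]
          have := (Finsupp.le_def.mp h2) l
          rwa [Finsupp.erase_ne hl] at this
    by_cases h1 : t k ≤ n
    · by_cases h2 : t.erase k ≤ g
      · rw [if_pos h1, if_pos h2, if_pos (hcond.mpr ⟨h1, h2⟩)]
        rw [smul_mul_smul_comm]
        congr 1
        · -- binomial coefficients
          unfold binomF
          rw [← Finset.mul_prod_erase Finset.univ
              (fun l => (((Finsupp.single k n + g) l)).choose (t l)) (Finset.mem_univ k),
            ← Finset.mul_prod_erase Finset.univ
              (fun l => (g l).choose ((Finsupp.erase k t) l)) (Finset.mem_univ k)]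
          simp only [hexpk, Finsupp.erase_same, hgk, Nat.choose_zero_right, one_mul]
          congr 1
          apply Finset.prod_congr rfl
          intro l hl
          have hlk : l ≠ k := (Finset.mem_erase.mp hl).1
          rw [Finsupp.erase_ne hlk, Finsupp.add_apply,
            Finsupp.single_eq_of_ne' (fun h' => hlk h'.symm), zero_add]
        · -- powers of a
          have hk1 : ((g - Finsupp.erase k t : Fin s →₀ ℕ)) k = 0 := by
            rw [Finsupp.tsub_apply, Finsupp.erase_same, hgk]
            rfl
          have hk2 : ((Finsupp.single k n + g - t : Fin s →₀ ℕ)) k = n - t k := by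
            rw [Finsupp.tsub_apply, hexpk]
          rw [← Finset.mul_prod_erase Finset.univ
              (fun l => a l ^ ((Finsupp.single k n + g - t : Fin s →₀ ℕ) l))
              (Finset.mem_univ k),
            ← Finset.mul_prod_erase Finset.univ
              (fun l => a l ^ ((g - Finsupp.erase k t : Fin s →₀ ℕ) l))
              (Finset.mem_univ k), hk1, hk2, pow_zero, one_mul]
          congr 1
          apply Finset.prod_congr rfl
          intro l hl
          have hlk : l ≠ k := (Finset.mem_erase.mp hl).1
          rw [Finsupp.tsub_apply, Finsupp.tsub_apply, Finsupp.erase_ne hlk,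
            Finsupp.add_apply, Finsupp.single_eq_of_ne' (fun h' => hlk h'.symm),
            zero_add]
      · rw [if_neg (show ¬ Finsupp.erase k t ≤ g from h2), mul_zero,
          if_neg (fun h => h2 (hcond.mp h).2)]
    · rw [if_neg h1, zero_mul, if_neg (fun h => h1 (hcond.mp h).1)]
lemma eval_mvHasseDeriv (g : Fin s → R) (i : Fin s →₀ ℕ) (P : MvPolynomial (Fin s) R) :
    MvPolynomial.eval g (mvHasseDeriv i P)
      = ∑ j ∈ P.support, (if i ≤ j then
          binomF i j • (MvPolynomial.coeff j P * ∏ k, g k ^ ((j - i) k)) else 0) := by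
  rw [mvHasseDeriv_eq, map_sum]
  apply Finset.sum_congr rfl
  intro j _
  split
  · rw [map_nsmul, MvPolynomial.eval_monomial]
    congr 1
    congr 1
    exact Finsupp.prod_fintype _ _ (fun k => pow_zero (g k))
  · exact map_zero _

/-- substitution `Y ↦ Y + a` in the `Y`-variables. -/
noncomputable def shiftY (a : Fin s → R) (P : MvPolynomial (Fin s) R) :
    MvPolynomial (Fin s) R :=
  MvPolynomial.eval₂ MvPolynomial.C (fun k => MvPolynomial.X k + MvPolynomial.C (a k)) P

lemma coeff_shiftY (a : Fin s → R) (P : MvPolynomial (Fin s) R) (t : Fin s →₀ ℕ) :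
    MvPolynomial.coeff t (shiftY a P) = MvPolynomial.eval a (mvHasseDeriv t P) := by
  rw [shiftY, MvPolynomial.eval₂_eq, MvPolynomial.coeff_sum, eval_mvHasseDeriv]
  apply Finset.sum_congr rfl
  intro j _
  rw [MvPolynomial.coeff_C_mul, coeff_prod_X_add_C, mul_ite, mul_zero]
  split
  · rw [mul_smul_comm]
  · rfl

lemma map_mvHasseDeriv {S : Type*} [CommSemiring S] (f : R →+* S) (i : Fin s →₀ ℕ)
    (P : MvPolynomial (Fin s) R) :
    mvHasseDeriv i (MvPolynomial.map f P) = MvPolynomial.map f (mvHasseDeriv i P) := by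
  ext t
  rw [mvHasseDeriv_coeff, MvPolynomial.coeff_map, MvPolynomial.coeff_map,
    mvHasseDeriv_coeff, map_nsmul]

lemma shiftY_mvHasseDeriv (a : Fin s → R) (i : Fin s →₀ ℕ) (P : MvPolynomial (Fin s) R) :
    shiftY a (mvHasseDeriv i P) = mvHasseDeriv i (shiftY a P) := by
  ext t
  rw [coeff_shiftY, mvHasseDeriv_comp, map_nsmul, mvHasseDeriv_coeff, coeff_shiftY]

/-- total degree of a multi-index. -/
def mdeg {s : ℕ} (i : Fin s →₀ ℕ) : ℕ := ∑ k, i k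

lemma mdeg_sum_eq (j : Fin s →₀ ℕ) : (j.sum fun _ e => e) = mdeg j :=
  Finsupp.sum_fintype _ _ (fun _ => rfl)

lemma mdeg_mono {i j : Fin s →₀ ℕ} (h : i ≤ j) : mdeg i ≤ mdeg j :=
  Finset.sum_le_sum fun k _ => Finsupp.le_def.mp h k

lemma mdeg_tsub_add {i j : Fin s →₀ ℕ} (h : i ≤ j) : mdeg (j - i) + mdeg i = mdeg j := by
  rw [mdeg, mdeg, mdeg, ← Finset.sum_add_distrib]
  apply Finset.sum_congr rfl
  intro k _
  rw [Finsupp.tsub_apply]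
  have := Finsupp.le_def.mp h k
  omega

lemma mdeg_lt {i j : Fin s →₀ ℕ} (h : i ≤ j) (hne : i ≠ j) : mdeg i < mdeg j := by
  have h1 := mdeg_tsub_add h
  have h2 : mdeg (j - i) ≠ 0 := by
    intro h0
    apply hne
    have hji : j - i = 0 := by
      ext l
      have := Finset.sum_eq_zero_iff.mp h0 l (Finset.mem_univ l)
      simpa using this
    exact le_antisymm h (tsub_eq_zero_iff_le.mp hji)
  omega
lemma pow_X_dvd_prod {K : Type*} [Field K] {s : ℕ} (S : Fin s → Polynomial K)
    (hS : ∀ k, Polynomial.X ∣ S k) (d : Fin s →₀ ℕ) :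
    Polynomial.X ^ (mdeg d) ∣ ∏ k, S k ^ (d k) := by
  rw [mdeg, ← Finset.prod_pow_eq_pow_sum]
  exact Finset.prod_dvd_prod_of_dvd _ _ (fun k _ => pow_dvd_pow_of_dvd (hS k) _)

theorem core {K : Type*} [Field K] {s : ℕ} (P : MvPolynomial (Fin s) (Polynomial K))
    (S : Fin s → Polynomial K) (hS : ∀ k, Polynomial.X ∣ S k) (m : ℕ) :
    (∀ (j : Fin s →₀ ℕ) (h : ℕ), h + mdeg j < m →
        (MvPolynomial.coeff j P).coeff h = 0) ↔
    (∀ i : Fin s →₀ ℕ, mdeg i < m →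
      Polynomial.X ^ (m - mdeg i) ∣ MvPolynomial.eval S (mvHasseDeriv i P)) := by
  constructor
  · intro H i hi
    rw [eval_mvHasseDeriv]
    apply Finset.dvd_sum
    intro j _
    split_ifs with hle
    · have hij := mdeg_mono hle
      have hts := mdeg_tsub_add hle
      have h1 : Polynomial.X ^ (m - mdeg j) ∣ MvPolynomial.coeff j P :=
        Polynomial.X_pow_dvd_iff.mpr (fun d hd => H j d (by omega))
      have h2 := pow_X_dvd_prod S hS (j - i)
      have h3 : Polynomial.X ^ ((m - mdeg j) + mdeg (j - i))
          ∣ MvPolynomial.coeff j P * ∏ k, S k ^ ((j - i) k) := by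
        rw [pow_add]; exact mul_dvd_mul h1 h2
      have h4 := dvd_trans (pow_dvd_pow Polynomial.X
        (show m - mdeg i ≤ (m - mdeg j) + mdeg (j - i) by omega)) h3
      rw [nsmul_eq_mul]
      exact h4.mul_left _
    · exact dvd_zero _
  · intro H
    have key : ∀ (n : ℕ) (j : Fin s →₀ ℕ), mdeg j < m → m - mdeg j ≤ n →
        Polynomial.X ^ (m - mdeg j) ∣ MvPolynomial.coeff j P := by
      intro n
      induction n with
      | zero => intro j hj hle; exact absurd hle (by omega)
      | succ n ih =>
        intro j hj hle
        by_cases hmem : j ∈ P.support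
        · have hEv := H j hj
          rw [eval_mvHasseDeriv, ← Finset.add_sum_erase _ _ hmem] at hEv
          have hfirst : (if j ≤ j then
              binomF j j • (MvPolynomial.coeff j P * ∏ k, S k ^ ((j - j) k)) else 0)
              = MvPolynomial.coeff j P := by
            simp [binomF, Nat.choose_self]
          rw [hfirst] at hEv
          have hsum : Polynomial.X ^ (m - mdeg j) ∣ ∑ j' ∈ P.support.erase j,
              (if j ≤ j' then
                binomF j j' • (MvPolynomial.coeff j' P * ∏ k, S k ^ ((j' - j) k))
               else 0) := by
            apply Finset.dvd_sum
            intro j' hj'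
            obtain ⟨hne, hmem'⟩ := Finset.mem_erase.mp hj'
            split_ifs with hle'
            · have hlt := mdeg_lt hle' (fun h => hne h.symm)
              have hts := mdeg_tsub_add hle'
              rw [nsmul_eq_mul]
              apply Dvd.dvd.mul_left
              by_cases hm' : mdeg j' < m
              · have h1 := ih j' hm' (by omega)
                have h2 := pow_X_dvd_prod S hS (j' - j)
                have h3 : Polynomial.X ^ ((m - mdeg j') + mdeg (j' - j))
                    ∣ MvPolynomial.coeff j' P * ∏ k, S k ^ ((j' - j) k) := by
                  rw [pow_add]; exact mul_dvd_mul h1 h2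
                exact dvd_trans (pow_dvd_pow Polynomial.X (by omega)) h3
              · have h2 := pow_X_dvd_prod S hS (j' - j)
                have h3 := dvd_trans (pow_dvd_pow Polynomial.X
                  (show m - mdeg j ≤ mdeg (j' - j) by omega)) h2
                exact h3.mul_left _
            · exact dvd_zero _
          have := dvd_sub hEv hsum
          rwa [add_sub_cancel_right] at this
        · rw [MvPolynomial.notMem_support_iff.mp hmem]
          exact dvd_zero _
    intro j h hjh
    exact Polynomial.X_pow_dvd_iff.mp (key m j (by omega) (by omega)) h (by omega)

end Lemmas

/-- The shifted polynomial `Q(X + x, Y_1 + y_1, ..., Y_s + y_s)`. -/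
noncomputable def shiftPoint {K : Type*} [Field K] {s : ℕ} (x : K) (y : Fin s → K)
    (Q : MvPolynomial (Fin s) (Polynomial K)) : MvPolynomial (Fin s) (Polynomial K) :=
  MvPolynomial.eval₂
    ((MvPolynomial.C).comp (Polynomial.aeval (Polynomial.X + Polynomial.C x)).toRingHom)
    (fun k => MvPolynomial.X k + MvPolynomial.C (Polynomial.C (y k))) Q

/-- `(x, y)` is a zero of `Q` of multiplicity at least `m`: the shifted polynomial
`Q(X+x, Y+y)` has no monomial of total degree less than `m`. -/
def VanishesAt {K : Type*} [Field K] {s : ℕ} (Q : MvPolynomial (Fin s) (Polynomial K))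
    (x : K) (y : Fin s → K) (m : ℕ) : Prop :=
  ∀ (j : Fin s →₀ ℕ) (h : ℕ), h + (j.sum fun _ e => e) < m →
    Polynomial.coeff (MvPolynomial.coeff j (shiftPoint x y Q)) h = 0

/-- `(x, y)` is a zero of `Q` of multiplicity at least `m` iff for every
multi-index `i` with `|i| < m`, the polynomial `Q^{[i]}(X, R_1, ..., R_s)` is
divisible by `(X - x)^{m - |i|}`, where the `R_j` interpolate `y_j` at `x`. -/
theorem vanishing_iff_hasse_divisibility {K : Type*} [Field K] {s : ℕ}
    (x : K) (y : Fin s → K) (R : Fin s → Polynomial K)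
    (hR : ∀ j, Polynomial.eval x (R j) = y j)
    (Q : MvPolynomial (Fin s) (Polynomial K)) (m : ℕ) (hm : 0 < m) :
    VanishesAt Q x y m ↔
      ∀ i : Fin s →₀ ℕ, (i.sum fun _ e => e) < m →
        (Polynomial.X - Polynomial.C x) ^ (m - (i.sum fun _ e => e)) ∣
          MvPolynomial.eval R (mvHasseDeriv i Q) := by
  set φ : Polynomial K →+* Polynomial K :=
    (Polynomial.aeval (Polynomial.X + Polynomial.C x)).toRingHom with hφdef
  set ψ : Polynomial K →+* Polynomial K :=
    (Polynomial.aeval (Polynomial.X - Polynomial.C x)).toRingHom with hψdef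
  have hcompφ : ∀ p : Polynomial K, φ p = p.comp (Polynomial.X + Polynomial.C x) := by
    intro p
    simp [hφdef, Polynomial.aeval_def, Polynomial.algebraMap_eq, Polynomial.comp]
  have hcompψ : ∀ p : Polynomial K, ψ p = p.comp (Polynomial.X - Polynomial.C x) := by
    intro p
    simp [hψdef, Polynomial.aeval_def, Polynomial.algebraMap_eq, Polynomial.comp]
  have hψφ : ∀ p, ψ (φ p) = p := by
    intro p
    rw [hcompφ, hcompψ, Polynomial.comp_assoc]
    simp
  have hφX : φ (Polynomial.X - Polynomial.C x) = Polynomial.X := by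
    rw [map_sub]
    simp [hφdef]
  have hψX : ψ Polynomial.X = Polynomial.X - Polynomial.C x := by
    simp [hψdef]
  have hdvd : ∀ (n : ℕ) (p : Polynomial K),
      (Polynomial.X - Polynomial.C x) ^ n ∣ p ↔ Polynomial.X ^ n ∣ φ p := by
    intro n p
    constructor
    · rintro ⟨q, rfl⟩
      exact ⟨φ q, by rw [map_mul, map_pow, hφX]⟩
    · rintro ⟨q, hq⟩
      have h := congrArg ψ hq
      rw [hψφ, map_mul, map_pow, hψX] at h
      exact ⟨ψ q, h⟩
  set S : Fin s → Polynomial K := fun k => φ (R k) - Polynomial.C (y k) with hSdef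
  have hS : ∀ k, Polynomial.X ∣ S k := by
    intro k
    rw [Polynomial.X_dvd_iff, hSdef]
    simp only [Polynomial.coeff_sub, Polynomial.coeff_C_zero]
    rw [hcompφ, Polynomial.coeff_zero_eq_eval_zero, Polynomial.eval_comp]
    simp [hR k]
  set y' : Fin s → Polynomial K := fun k => Polynomial.C (y k) with hy'def
  set U := MvPolynomial.map φ Q with hUdef
  have hV : shiftY y' U = shiftPoint x y Q := by
    rw [shiftY, hUdef, MvPolynomial.eval₂_map]
    rfl
  have hevshift : ∀ W : MvPolynomial (Fin s) (Polynomial K),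
      MvPolynomial.eval S (shiftY y' W)
        = MvPolynomial.eval (fun k => S k + Polynomial.C (y k)) W := by
    intro W
    rw [shiftY]
    have h := MvPolynomial.eval₂_comp_left (MvPolynomial.eval S)
      (MvPolynomial.C : Polynomial K →+* MvPolynomial (Fin s) (Polynomial K))
      (fun k => MvPolynomial.X k + MvPolynomial.C (y' k)) W
    rw [h]
    have h1 : (MvPolynomial.eval S).comp
        (MvPolynomial.C : Polynomial K →+* MvPolynomial (Fin s) (Polynomial K))
        = RingHom.id _ := RingHom.ext fun p => by simp
    rw [h1]
    congr 1
    funext k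
    simp [hy'def]
  have hkey : ∀ i : Fin s →₀ ℕ,
      φ (MvPolynomial.eval R (mvHasseDeriv i Q))
        = MvPolynomial.eval S (mvHasseDeriv i (shiftPoint x y Q)) := by
    intro i
    have step1 : φ (MvPolynomial.eval R (mvHasseDeriv i Q))
        = MvPolynomial.eval₂ φ (fun k => φ (R k)) (mvHasseDeriv i Q) := by
      have h0 : MvPolynomial.eval R (mvHasseDeriv i Q)
          = MvPolynomial.eval₂ (RingHom.id _) R (mvHasseDeriv i Q) := rfl
      rw [h0, MvPolynomial.eval₂_comp_left φ]
      simp only [RingHom.comp_id]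
      rfl
    have step2 : MvPolynomial.eval₂ φ (fun k => φ (R k)) (mvHasseDeriv i Q)
        = MvPolynomial.eval (fun k => φ (R k)) (mvHasseDeriv i U) := by
      rw [hUdef, map_mvHasseDeriv, MvPolynomial.eval_map]
    have hfun : (fun k => φ (R k)) = fun k => S k + Polynomial.C (y k) := by
      funext k
      rw [hSdef]
      simp
    have step3 : MvPolynomial.eval (fun k => φ (R k)) (mvHasseDeriv i U)
        = MvPolynomial.eval S (shiftY y' (mvHasseDeriv i U)) := by
      rw [hfun]
      exact (hevshift _).symm
    rw [step1, step2, step3, shiftY_mvHasseDeriv, hV]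
  have hcore := core (shiftPoint x y Q) S hS m
  constructor
  · intro hvan i hi
    rw [mdeg_sum_eq] at hi ⊢
    have hx := hcore.mp (fun j h hh => hvan j h (by rwa [mdeg_sum_eq])) i hi
    rw [hdvd, hkey i]
    exact hx
  · intro hdiv j h hh
    rw [mdeg_sum_eq] at hh
    refine hcore.mpr ?_ j h hh
    intro i hi
    have hx := hdiv i (by rwa [mdeg_sum_eq])
    rw [mdeg_sum_eq, hdvd, hkey i] at hx
    exact hx
end

section
/- Let K be a field, ℓ, m positive integers, x ∈ K, and Q = Σ_{j ≤ ℓ} Q_j(X) Y^j a polynomial in K[X, Y] with deg_Y(Q) ≤ ℓ. Define the Y-reversal Q̄ = Y^ℓ Q(X, Y^{-1}) = Σ_{j ≤ ℓ} Q_{ℓ-j}(X) Y^j. Then Q̄(x, 0) = 0 with multiplicity at least m if and only if (X - x)^{m - j} divides Q_{ℓ - j} for each j < m. -/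
/-- The `Y`-reversal `Q̄ = Y^ℓ Q(X, Y^{-1}) = Σ_{j ≤ ℓ} Q_{ℓ-j}(X) Y^j` of a
polynomial `Q ∈ K[X][Y]` with `deg_Y Q ≤ ℓ`. -/
noncomputable def yReversal {K : Type*} [Field K] (ℓ : ℕ)
    (Q : Polynomial (Polynomial K)) : Polynomial (Polynomial K) :=
  ∑ j ∈ Finset.range (ℓ + 1), Polynomial.C (Q.coeff (ℓ - j)) * Polynomial.X ^ j

open Polynomial in
lemma yRev_coeff {K : Type*} [Field K] (ℓ : ℕ) (Q : Polynomial (Polynomial K))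
    {j : ℕ} (hj : j ≤ ℓ) :
    (∑ i ∈ Finset.range (ℓ + 1), C (Q.coeff (ℓ - i)) * X ^ i).coeff j = Q.coeff (ℓ - j) := by
  rw [finset_sum_coeff]
  rw [Finset.sum_eq_single j]
  · simp
  · intro i _ hij; simp [coeff_C_mul, coeff_X_pow, hij, Ne.symm hij]
  · intro h; exact absurd (Finset.mem_range.2 (Nat.lt_succ_of_le hj)) h

/-- For `Q = Σ_{j ≤ ℓ} Q_j(X) Y^j` with `deg_Y Q ≤ ℓ`, the reversal `Q̄`
satisfies `Q̄(x, 0) = 0` with multiplicity at least `m` (i.e. `Q̄(X+x,Y)` has no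
monomial of total degree less than `m`) iff `(X - x)^{m-j}` divides `Q_{ℓ-j}`
for each `j < m`. -/
theorem vanishing_at_infinity_iff {K : Type*} [Field K] (ℓ m : ℕ)
    (hℓ : 0 < ℓ) (hm : 0 < m) (hmℓ : m ≤ ℓ) (x : K)
    (Q : Polynomial (Polynomial K)) (hQ : Q.natDegree ≤ ℓ) :
    (∀ j h : ℕ, h + j < m →
        Polynomial.coeff (Polynomial.taylor x ((yReversal ℓ Q).coeff j)) h = 0) ↔
      ∀ j < m, (Polynomial.X - Polynomial.C x) ^ (m - j) ∣ Q.coeff (ℓ - j) := by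
  open Polynomial in
  constructor
  · intro H j hj
    rw [X_sub_C_pow_dvd_iff, X_pow_dvd_iff]
    intro h hh
    have := H j h (by omega)
    rwa [yReversal, yRev_coeff ℓ Q (hj.le.trans hmℓ), taylor_apply] at this
  · intro H j h hjh
    rw [yReversal, yRev_coeff ℓ Q (le_trans (by omega) hmℓ), taylor_apply]
    have := H j (by omega)
    rw [X_sub_C_pow_dvd_iff, X_pow_dvd_iff] at this
    exact this h (by omega)
end

section
/- Let K be a field, let P_i ∈ K[X] be monic of degree M'_i and F_{i,j} ∈ K[X] with deg(F_{i,j}) < M'_i for 0 ≤ i < μ and 0 ≤ j < ν, and let N'_0,...,N'_{ν-1} be positive integers. Set β = max_h N'_h, δ_i = M'_i + β - 1, γ_j = β - N'_j, and define the reversals P̄_i = X^{M'_i} P_i(1/X), F̄_{i,j} = X^{M'_i - 1} F_{i,j}(1/X), Q̄_j = X^{N'_j - 1} Q_j(1/X), and S_{i,j} = (X^{γ_j} F̄_{i,j} / P̄_i) mod X^{δ_i} (well-defined since P̄_i(0) = 1). Then for polynomials Q_0,...,Q_{ν-1} with deg(Q_j) < N'_j for all j, the congruences Σ_j F_{i,j}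 Q_j ≡ 0 (mod P_i) hold for all i < μ if and only if for each i < μ there exists T_i ∈ K[X] with deg(T_i) < β - 1 such that Σ_j S_{i,j} Q̄_j ≡ T_i (mod X^{δ_i}). -/
open Polynomial

private lemma reflect_invol {R : Type*} [Semiring R] (N : ℕ) (f : R[X]) :
    (f.reflect N).reflect N = f := by
  ext i; simp [coeff_reflect]

private lemma natDegree_reflect_le' {R : Type*} [Semiring R] {N : ℕ} {f : R[X]}
    (h : f.natDegree ≤ N) : (f.reflect N).natDegree ≤ N := by
  rw [Polynomial.natDegree_le_iff_coeff_eq_zero] at *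
  intro m hm
  rw [coeff_reflect, revAt_eq_self_of_lt hm]
  exact h m hm

private lemma reflect_sum' {R ι : Type*} [Semiring R] (s : Finset ι) (f : ι → R[X]) (N : ℕ) :
    (∑ x ∈ s, f x).reflect N = ∑ x ∈ s, (f x).reflect N := by
  ext k; simp [Polynomial.finset_sum_coeff]

private lemma ndle {K : Type*} [Semiring K] {p : Polynomial K} {n : ℕ} (hn : 0 < n)
    (h : p.degree < (n : ℕ)) : p.natDegree ≤ n - 1 := by
  rcases eq_or_ne p 0 with rfl | hp
  · simp
  · have := (Polynomial.natDegree_lt_iff_degree_lt hp).mpr h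
    omega

private lemma wb_add_lt {x y : WithBot ℕ} {m k : ℕ} (hx : x ≤ (m : ℕ)) (hy : y < (k : ℕ)) :
    x + y < ((m + k : ℕ) : WithBot ℕ) := by
  rcases eq_or_ne x ⊥ with rfl | hx0
  · rw [WithBot.bot_add]; exact_mod_cast WithBot.bot_lt_coe (m + k)
  have h := WithBot.add_lt_add_of_le_of_lt hx0 hx hy
  simpa [Nat.cast_add] using h

private lemma wb_bot_lt {k : ℕ} : (⊥ : WithBot ℕ) < ((k : ℕ) : WithBot ℕ) := by
  exact_mod_cast WithBot.bot_lt_coe k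

/-- Derivation of the extended key equations: with `β = max_h N'_h`,
`δ_i = M'_i + β - 1`, `γ_j = β - N'_j`, the reversals
`P̄_i = X^{M'_i} P_i(1/X)`, `F̄_{i,j} = X^{M'_i-1} F_{i,j}(1/X)`,
`Q̄_j = X^{N'_j-1} Q_j(1/X)`, and `S_{i,j} = X^{γ_j} F̄_{i,j} / P̄_i mod X^{δ_i}`
(characterized by `P̄_i S_{i,j} ≡ X^{γ_j} F̄_{i,j} (mod X^{δ_i})` and
`deg S_{i,j} < δ_i`, well-defined since `P̄_i(0) = 1`), the congruences
`Σ_j F_{i,j} Q_j ≡ 0 (mod P_i)` for all `i` are equivalent to: for each `i`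
there is `T_i` with `deg T_i < β - 1` and
`Σ_j S_{i,j} Q̄_j ≡ T_i (mod X^{δ_i})`. -/
theorem extended_key_equations {K : Type*} [Field K] {μ ν : ℕ} (hν : 0 < ν)
    (M' : Fin μ → ℕ) (hM' : ∀ i, 0 < M' i)
    (N' : Fin ν → ℕ) (hN' : ∀ j, 0 < N' j)
    (P : Fin μ → Polynomial K)
    (hPmonic : ∀ i, (P i).Monic) (hPdeg : ∀ i, (P i).natDegree = M' i)
    (F : Fin μ → Fin ν → Polynomial K) (hF : ∀ i j, (F i j).degree < (M' i : ℕ))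
    (Q : Fin ν → Polynomial K) (hQ : ∀ j, (Q j).degree < (N' j : ℕ))
    (S : Fin μ → Fin ν → Polynomial K)
    (hSdeg : ∀ i j, (S i j).degree < ((M' i + Finset.univ.sup N' - 1 : ℕ) : WithBot ℕ))
    (hS : ∀ i j, (Polynomial.X : Polynomial K) ^ (M' i + Finset.univ.sup N' - 1) ∣
        (P i).reflect (M' i) * S i j -
          Polynomial.X ^ (Finset.univ.sup N' - N' j) * (F i j).reflect (M' i - 1)) :
    (∀ i, P i ∣ ∑ j, F i j * Q j) ↔
      (∀ i, ∃ T : Polynomial K,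
        T.degree < ((Finset.univ.sup N' - 1 : ℕ) : WithBot ℕ) ∧
        (Polynomial.X : Polynomial K) ^ (M' i + Finset.univ.sup N' - 1) ∣
          (∑ j, S i j * (Q j).reflect (N' j - 1)) - T) := by
  have hβ1 : 1 ≤ Finset.univ.sup N' := le_trans (hN' ⟨0, hν⟩) (Finset.le_sup (Finset.mem_univ _))
  have hNβ : ∀ j, N' j ≤ Finset.univ.sup N' := fun j => Finset.le_sup (Finset.mem_univ _)
  set β := Finset.univ.sup N' with hβdef
  refine forall_congr' fun i => ?_
  have hm1 : 1 ≤ M' i := hM' i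
  have hFnd : ∀ j, (F i j).natDegree ≤ M' i - 1 := fun j => ndle (hM' i) (hF i j)
  have hQnd : ∀ j, (Q j).natDegree ≤ N' j - 1 := fun j => ndle (hN' j) (hQ j)
  have hPnd : (P i).natDegree ≤ M' i := le_of_eq (hPdeg i)
  have hAnd : (∑ j, F i j * Q j).natDegree ≤ M' i + β - 2 := by
    refine natDegree_sum_le_of_forall_le _ _ fun j _ => ?_
    refine natDegree_mul_le.trans ?_
    have := hNβ j; have := hN' j
    have h1 := hFnd j; have h2 := hQnd j
    omega
  have key : ∀ j : Fin ν, (F i j * Q j).reflect (M' i + β - 2)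
      = X ^ (β - N' j) * ((F i j).reflect (M' i - 1) * (Q j).reflect (N' j - 1)) := by
    intro j
    have h12 : (F i j * Q j).natDegree ≤ (M' i - 1) + (N' j - 1) :=
      natDegree_mul_le.trans (add_le_add (hFnd j) (hQnd j))
    have e : M' i + β - 2 = (β - N' j) + ((M' i - 1) + (N' j - 1)) := by
      have := hNβ j; have := hN' j; omega
    calc (F i j * Q j).reflect (M' i + β - 2)
        = ((1 : K[X]) * (F i j * Q j)).reflect ((β - N' j) + ((M' i - 1) + (N' j - 1))) := by
          rw [one_mul, e]
      _ = (1 : K[X]).reflect (β - N' j) * (F i j * Q j).reflect ((M' i - 1) + (N' j - 1)) :=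
          reflect_mul _ _ (by simp) h12
      _ = X ^ (β - N' j) * ((F i j).reflect (M' i - 1) * (Q j).reflect (N' j - 1)) := by
          rw [reflect_mul _ _ (hFnd j) (hQnd j), ← C_1, reflect_C, C_1, one_mul]
  have hAref : (∑ j, F i j * Q j).reflect (M' i + β - 2)
      = ∑ j, X ^ (β - N' j) * ((F i j).reflect (M' i - 1) * (Q j).reflect (N' j - 1)) := by
    rw [reflect_sum']
    exact Finset.sum_congr rfl fun j _ => key j
  have hPb0 : ((P i).reflect (M' i)).coeff 0 = 1 := by
    rw [coeff_reflect, revAt_zero, ← hPdeg i]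
    exact (hPmonic i).coeff_natDegree
  have hcop : IsCoprime ((X : K[X]) ^ (M' i + β - 1)) ((P i).reflect (M' i)) := by
    refine IsCoprime.pow_left ?_
    refine (Polynomial.prime_X.coprime_iff_not_dvd).mpr ?_
    rw [Polynomial.X_dvd_iff, hPb0]
    exact one_ne_zero
  have hident : ∀ T : K[X],
      (P i).reflect (M' i) * ((∑ j, S i j * (Q j).reflect (N' j - 1)) - T)
        - ((∑ j, F i j * Q j).reflect (M' i + β - 2) - (P i).reflect (M' i) * T)
      = ∑ j, (((P i).reflect (M' i) * S i j - X ^ (β - N' j) * (F i j).reflect (M' i - 1)) *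
          (Q j).reflect (N' j - 1)) := by
    intro T
    rw [hAref, mul_sub, Finset.mul_sum, sub_sub_sub_cancel_right, ← Finset.sum_sub_distrib]
    exact Finset.sum_congr rfl fun j _ => by ring
  have hdvdsum : ∀ T : K[X], (X : K[X]) ^ (M' i + β - 1) ∣
      (P i).reflect (M' i) * ((∑ j, S i j * (Q j).reflect (N' j - 1)) - T)
        - ((∑ j, F i j * Q j).reflect (M' i + β - 2) - (P i).reflect (M' i) * T) := by
    intro T
    rw [hident]
    exact Finset.dvd_sum fun j _ => Dvd.dvd.mul_right (hS i j) _
  constructor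
  · rintro ⟨B, hB⟩
    obtain ⟨T, hTdeg, hTeq⟩ : ∃ T : K[X],
        T.degree < ((β - 1 : ℕ) : WithBot ℕ) ∧
        (∑ j, F i j * Q j).reflect (M' i + β - 2) = (P i).reflect (M' i) * T := by
      rcases eq_or_ne B 0 with rfl | hBne
      · rw [mul_zero] at hB
        refine ⟨0, by rw [degree_zero]; exact wb_bot_lt, ?_⟩
        rw [hB, mul_zero]
        simp
      · have hnd : (∑ j, F i j * Q j).natDegree = M' i + B.natDegree := by
          rw [hB, natDegree_mul (hPmonic i).ne_zero hBne, hPdeg i]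
        have hBnd : B.natDegree ≤ β - 2 ∧ 2 ≤ β := by
          rw [hnd] at hAnd; omega
        refine ⟨B.reflect (β - 2), ?_, ?_⟩
        · have h1 : (B.reflect (β - 2)).degree ≤ ((β - 2 : ℕ) : WithBot ℕ) :=
            degree_le_natDegree.trans (Nat.cast_le.mpr (natDegree_reflect_le' hBnd.1))
          exact lt_of_le_of_lt h1 (Nat.cast_lt.mpr (by omega))
        · have e : M' i + β - 2 = M' i + (β - 2) := by omega
          rw [hB, e, reflect_mul _ _ hPnd hBnd.1]
    refine ⟨T, hTdeg, ?_⟩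
    have h1 : (X : K[X]) ^ (M' i + β - 1) ∣
        (P i).reflect (M' i) * ((∑ j, S i j * (Q j).reflect (N' j - 1)) - T) := by
      have h := hdvdsum T
      rw [hTeq, sub_self, sub_zero] at h
      exact h
    exact hcop.dvd_of_dvd_mul_left h1
  · rintro ⟨T, hTdeg, hTdvd⟩
    have hd2 : (X : K[X]) ^ (M' i + β - 1) ∣
        (P i).reflect (M' i) * ((∑ j, S i j * (Q j).reflect (N' j - 1)) - T) :=
      hTdvd.mul_left _
    have hd3 : (X : K[X]) ^ (M' i + β - 1) ∣
        (∑ j, F i j * Q j).reflect (M' i + β - 2) - (P i).reflect (M' i) * T := by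
      have h := dvd_sub hd2 (hdvdsum T)
      rwa [sub_sub_cancel] at h
    have hdeg : ((∑ j, F i j * Q j).reflect (M' i + β - 2) - (P i).reflect (M' i) * T).degree
        < ((M' i + β - 1 : ℕ) : WithBot ℕ) := by
      refine lt_of_le_of_lt (degree_sub_le _ _) (max_lt ?_ ?_)
      · have h1 : ((∑ j, F i j * Q j).reflect (M' i + β - 2)).degree
            ≤ ((M' i + β - 2 : ℕ) : WithBot ℕ) :=
          degree_le_natDegree.trans (Nat.cast_le.mpr (natDegree_reflect_le' hAnd))
        exact lt_of_le_of_lt h1 (Nat.cast_lt.mpr (by omega))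
      · refine lt_of_le_of_lt (degree_mul_le _ _) ?_
        have hPbd : ((P i).reflect (M' i)).degree ≤ (M' i : ℕ) :=
          degree_le_natDegree.trans (Nat.cast_le.mpr (natDegree_reflect_le' hPnd))
        have h := wb_add_lt hPbd hTdeg
        have e : M' i + (β - 1) = M' i + β - 1 := by omega
        rwa [e] at h
    have heq : (∑ j, F i j * Q j).reflect (M' i + β - 2) = (P i).reflect (M' i) * T := by
      by_contra hne
      have hne' := sub_ne_zero.mpr hne
      have h := Polynomial.degree_le_of_dvd hd3 hne'
      rw [degree_X_pow] at h
      exact absurd (lt_of_le_of_lt h hdeg) (lt_irrefl _)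
    rcases eq_or_lt_of_le hβ1 with hβeq | hβ2
    · have hT0 : T = 0 := by
        have h0 : T.degree < (0 : WithBot ℕ) := by
          rw [← hβeq] at hTdeg; simpa using hTdeg
        exact degree_eq_bot.mp (Nat.WithBot.lt_zero_iff.mp h0)
      have h0 : (∑ j, F i j * Q j).reflect (M' i + β - 2) = 0 := by
        rw [heq, hT0, mul_zero]
      rw [reflect_eq_zero_iff.mp h0]
      exact dvd_zero _
    · have hTnd : T.natDegree ≤ β - 2 := by
        have := ndle (n := β - 1) (by omega) hTdeg
        omega
      have e : M' i + β - 2 = M' i + (β - 2) := by omega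
      have hfin : (∑ j, F i j * Q j) = (P i) * T.reflect (β - 2) := by
        have h4 := congrArg (fun p : K[X] => p.reflect (M' i + β - 2)) heq
        rw [reflect_invol] at h4
        rw [h4, e, reflect_mul _ _ (natDegree_reflect_le' hPnd) hTnd, reflect_invol]
      exact ⟨_, hfin⟩
end

section
/- Let K be a field and consider Problem MultivariateInterpolation with parameters s, ℓ, n, multiplicities m_1,...,m_n, bound b, weights k = (k_1,...,k_s), and points with pairwise distinct x-coordinates. Suppose m = max_i m_i satisfies m > ℓ. Define P = Π_{i : m_i > ℓ} (X - x_i)^{m_i - ℓ} and d = deg(P). Then any polynomial Q solving the problem (nonzero, deg_Y(Q) ≤ ℓ, wdeg_k(Q) < b, vanishing at each point (x_i, y_i) with multiplicity ≥ m_i) is divisible by P, and Q ↦ Q/P is a bijection between solutions for parameters (s, ℓ, n, m_1,...,m_n, b, k) and solutions for parameters (s, ℓ, n, m'_1,...,m'_n, b - d, k), where m'_i = min(m_i, ℓ). -/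
/-- `Q` is a solution of Problem MultivariateInterpolation with list-size `ℓ`,
multiplicities `mm`, weighted-degree bound `b`, weights `k`, and points
`(x i, y i)`: `Q` is nonzero, `deg_Y Q ≤ ℓ`, `wdeg_k Q < b`, and `Q` vanishes
at each point with multiplicity at least `mm i`. -/
def IsSolution {K : Type*} [Field K] {s n : ℕ} (ℓ : ℕ) (mm : Fin n → ℕ) (b : ℤ)
    (k : Fin s → ℤ) (x : Fin n → K) (y : Fin n → Fin s → K)
    (Q : MvPolynomial (Fin s) (Polynomial K)) : Prop :=
  Q ≠ 0 ∧
  (∀ j : Fin s →₀ ℕ, MvPolynomial.coeff j Q ≠ 0 → (j.sum fun _ e => e) ≤ ℓ) ∧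
  (∀ j : Fin s →₀ ℕ, MvPolynomial.coeff j Q ≠ 0 →
      ((MvPolynomial.coeff j Q).natDegree : ℤ) + ∑ r, (j r : ℤ) * k r < b) ∧
  (∀ i : Fin n, VanishesAt Q (x i) (y i) (mm i))

namespace ShiftAux

open Polynomial MvPolynomial

variable {K : Type*} [Field K] {s : ℕ}

/-- `shiftPoint` as a ring homomorphism. -/
noncomputable def shiftHom (x : K) (y : Fin s → K) :
    MvPolynomial (Fin s) (Polynomial K) →+* MvPolynomial (Fin s) (Polynomial K) :=
  MvPolynomial.eval₂Hom
    ((MvPolynomial.C).comp (Polynomial.aeval (Polynomial.X + Polynomial.C x)).toRingHom)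
    (fun k => MvPolynomial.X k + MvPolynomial.C (Polynomial.C (y k)))

lemma shiftPoint_eq (x : K) (y : Fin s → K) (Q : MvPolynomial (Fin s) (Polynomial K)) :
    shiftPoint x y Q = shiftHom x y Q := rfl

lemma shiftHom_C (x : K) (y : Fin s → K) (p : Polynomial K) :
    shiftHom x y (MvPolynomial.C p)
      = MvPolynomial.C (Polynomial.aeval (Polynomial.X + Polynomial.C x) p) := by
  simp [shiftHom]

lemma shiftHom_X (x : K) (y : Fin s → K) (i : Fin s) :
    shiftHom x y (MvPolynomial.X i)
      = MvPolynomial.X i + MvPolynomial.C (Polynomial.C (y i)) := by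
  simp [shiftHom]

lemma aeval_XaddC_comp (a b : K) (p : Polynomial K) :
    Polynomial.aeval (Polynomial.X + Polynomial.C b)
        (Polynomial.aeval (Polynomial.X + Polynomial.C a) p)
      = Polynomial.aeval (Polynomial.X + Polynomial.C (a + b)) p := by
  have : ((Polynomial.aeval (Polynomial.X + Polynomial.C b)).comp
      (Polynomial.aeval (Polynomial.X + Polynomial.C a)) : Polynomial K →ₐ[K] Polynomial K)
      = Polynomial.aeval (Polynomial.X + Polynomial.C (a + b)) := by
    apply Polynomial.algHom_ext
    simp only [AlgHom.comp_apply, map_add, Polynomial.aeval_X, Polynomial.aeval_C,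
      Polynomial.algebraMap_eq, Polynomial.C_add]
    ring
  exact AlgHom.congr_fun this p

lemma shiftHom_comp (x x' : K) (y y' : Fin s → K) :
    (shiftHom x' y').comp (shiftHom x y)
      = shiftHom (x + x') (fun i => y i + y' i) (K := K) (s := s) := by
  apply MvPolynomial.ringHom_ext
  · intro p
    simp only [RingHom.comp_apply, shiftHom_C, aeval_XaddC_comp]
  · intro i
    simp only [RingHom.comp_apply, shiftHom_X, map_add, shiftHom_C, shiftHom_X]
    simp [Polynomial.aeval_C, Polynomial.C_add, add_assoc]
    ring

lemma shiftHom_zero : shiftHom (0 : K) (0 : Fin s → K) = RingHom.id _ := by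
  apply MvPolynomial.ringHom_ext
  · intro p
    simp [shiftHom_C, Polynomial.aeval_X_left_apply]
  · intro i
    simp [shiftHom_X]

lemma shiftHom_leftInv (x : K) (y : Fin s → K) (Q : MvPolynomial (Fin s) (Polynomial K)) :
    shiftHom (-x) (fun i => -(y i)) (shiftHom x y Q) = Q := by
  have h := RingHom.congr_fun (shiftHom_comp x (-x) y (fun i => -(y i))) Q
  simp only [RingHom.comp_apply] at h
  rw [h]
  have h1 : (fun i => y i + -(y i)) = (0 : Fin s → K) := by funext i; simp
  rw [add_neg_cancel, h1, shiftHom_zero, RingHom.id_apply]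

lemma aeval_X_sub_C_pow (x : K) (t : ℕ) :
    Polynomial.aeval (Polynomial.X + Polynomial.C x)
        ((Polynomial.X - Polynomial.C x) ^ t) = (Polynomial.X : Polynomial K) ^ t := by
  rw [map_pow, map_sub, Polynomial.aeval_X, Polynomial.aeval_C, Polynomial.algebraMap_eq]
  rw [add_sub_cancel_right]

lemma C_dvd_shift_iff (x : K) (y : Fin s → K) (Q : MvPolynomial (Fin s) (Polynomial K)) (t : ℕ) :
    MvPolynomial.C ((Polynomial.X - Polynomial.C x) ^ t) ∣ Q ↔
      MvPolynomial.C ((Polynomial.X : Polynomial K) ^ t) ∣ shiftPoint x y Q := by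
  constructor
  · rintro ⟨R, rfl⟩
    refine ⟨shiftHom x y R, ?_⟩
    rw [shiftPoint_eq, map_mul, shiftHom_C, aeval_X_sub_C_pow]
  · rintro ⟨R, hR⟩
    have hQ : Q = shiftHom (-x) (fun i => -(y i)) (shiftPoint x y Q) :=
      (shiftHom_leftInv x y Q).symm
    rw [hQ, hR, map_mul, shiftHom_C]
    refine Dvd.dvd.mul_right (dvd_of_eq ?_) _
    congr 1
    rw [map_pow, Polynomial.aeval_X, map_neg, ← sub_eq_add_neg]

lemma vanishesAt_iff_dvd (Q : MvPolynomial (Fin s) (Polynomial K)) (x : K) (y : Fin s → K)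
    (m : ℕ) :
    VanishesAt Q x y m ↔ ∀ j : Fin s →₀ ℕ,
      (Polynomial.X : Polynomial K) ^ (m - (j.sum fun _ e => e)) ∣
        MvPolynomial.coeff j (shiftPoint x y Q) := by
  constructor
  · intro H j
    rw [Polynomial.X_pow_dvd_iff]
    intro h hh
    exact H j h (by omega)
  · intro H j h hh
    exact Polynomial.X_pow_dvd_iff.mp (H j) h (by omega)

lemma totalDegree_shiftPoint_le (x : K) (y : Fin s → K)
    (Q : MvPolynomial (Fin s) (Polynomial K)) :
    (shiftPoint x y Q).totalDegree ≤ Q.totalDegree := by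
  conv_lhs => rw [shiftPoint_eq, ← MvPolynomial.support_sum_monomial_coeff Q, map_sum]
  refine MvPolynomial.totalDegree_finsetSum_le fun j hj => ?_
  rw [shiftHom, MvPolynomial.eval₂Hom_monomial]
  refine le_trans (MvPolynomial.totalDegree_mul _ _) ?_
  rw [RingHom.comp_apply, MvPolynomial.totalDegree_C, zero_add]
  refine le_trans ?_ (MvPolynomial.le_totalDegree hj)
  rw [Finsupp.prod, Finsupp.sum]
  refine le_trans (MvPolynomial.totalDegree_finset_prod _ _) ?_
  refine Finset.sum_le_sum fun i _ => ?_
  refine le_trans (MvPolynomial.totalDegree_pow _ _) ?_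
  have h1 : (MvPolynomial.X i + MvPolynomial.C (Polynomial.C (y i)) :
      MvPolynomial (Fin s) (Polynomial K)).totalDegree ≤ 1 := by
    refine le_trans (MvPolynomial.totalDegree_add _ _) ?_
    simp [MvPolynomial.totalDegree_X, MvPolynomial.totalDegree_C]
  calc (j i) * (MvPolynomial.X i + MvPolynomial.C (Polynomial.C (y i)) :
      MvPolynomial (Fin s) (Polynomial K)).totalDegree ≤ j i * 1 :=
        Nat.mul_le_mul_left _ h1
    _ = j i := Nat.mul_one _

lemma X_pow_dvd_mul_iff (u f : Polynomial K) (hu : u.coeff 0 ≠ 0) (e a : ℕ) :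
    (Polynomial.X : Polynomial K) ^ a ∣ Polynomial.X ^ e * u * f ↔
      (Polynomial.X : Polynomial K) ^ (a - e) ∣ f := by
  rcases le_or_gt a e with h | h
  · have h1 : (Polynomial.X : Polynomial K) ^ a ∣ Polynomial.X ^ e * u * f :=
      dvd_mul_of_dvd_left (dvd_mul_of_dvd_left (pow_dvd_pow _ h) _) _
    simp [Nat.sub_eq_zero_of_le h, h1]
  · have hXu : IsCoprime (Polynomial.X : Polynomial K) u :=
      (Polynomial.irreducible_X.coprime_iff_not_dvd).mpr
        (by rw [Polynomial.X_dvd_iff]; exact hu)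
    have key : (Polynomial.X : Polynomial K) ^ a = Polynomial.X ^ e * Polynomial.X ^ (a - e) := by
      rw [← pow_add]; congr 1; omega
    rw [key, mul_assoc, mul_dvd_mul_iff_left (pow_ne_zero e Polynomial.X_ne_zero)]
    constructor
    · intro hd
      exact (hXu.pow_left).dvd_of_dvd_mul_left hd
    · intro hd
      exact hd.mul_left u

end ShiftAux

open ShiftAux

/-- Reduction of multiplicities larger than `ℓ`: with
`P = Π_{i : m_i > ℓ} (X - x_i)^{m_i - ℓ}` and `d = deg P`, every solution `Q`
(for multiplicities `m_i`, bound `b`) is divisible by `P`, and `Q ↦ Q/P` is a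
bijection between solutions for `(m_1,...,m_n, b)` and solutions for
`(min(m_1,ℓ),...,min(m_n,ℓ), b - d)`. -/
theorem multiplicity_reduction {K : Type*} [Field K] {s n : ℕ} (ℓ : ℕ) (hℓ : 0 < ℓ)
    (mm : Fin n → ℕ) (hmm : ∀ i, 0 < mm i) (b : ℤ) (k : Fin s → ℤ)
    (x : Fin n → K) (hx : Function.Injective x) (y : Fin n → Fin s → K)
    (hm : ℓ < Finset.univ.sup mm) :
    (∀ Q : MvPolynomial (Fin s) (Polynomial K), IsSolution ℓ mm b k x y Q →
        MvPolynomial.C (∏ i ∈ Finset.univ.filter fun i => ℓ < mm i,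
          (Polynomial.X - Polynomial.C (x i)) ^ (mm i - ℓ)) ∣ Q) ∧
    (∀ Q : MvPolynomial (Fin s) (Polynomial K),
      IsSolution ℓ mm b k x y Q ↔
        ∃ Q' : MvPolynomial (Fin s) (Polynomial K),
          IsSolution ℓ (fun i => min (mm i) ℓ)
            (b - ((∏ i ∈ Finset.univ.filter fun i => ℓ < mm i,
                (Polynomial.X - Polynomial.C (x i)) ^ (mm i - ℓ)).natDegree : ℤ))
            k x y Q' ∧
          Q = MvPolynomial.C (∏ i ∈ Finset.univ.filter fun i => ℓ < mm i,
                (Polynomial.X - Polynomial.C (x i)) ^ (mm i - ℓ)) * Q') := by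
  set S : Finset (Fin n) := Finset.univ.filter (fun i => ℓ < mm i) with hS
  set P : Polynomial K := ∏ i ∈ S, (Polynomial.X - Polynomial.C (x i)) ^ (mm i - ℓ) with hPdef
  have hPne : P ≠ 0 := Finset.prod_ne_zero_iff.mpr fun i _ =>
    pow_ne_zero _ (Polynomial.X_sub_C_ne_zero (x i))
  have hCPne : (MvPolynomial.C P : MvPolynomial (Fin s) (Polynomial K)) ≠ 0 := by
    simpa using hPne
  have hφP : ∀ i, Polynomial.aeval (Polynomial.X + Polynomial.C (x i)) P
      = ∏ j ∈ S, (Polynomial.X + Polynomial.C (x i - x j)) ^ (mm j - ℓ) := by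
    intro i
    rw [hPdef, map_prod]
    refine Finset.prod_congr rfl fun j hj => ?_
    rw [map_pow, map_sub, Polynomial.aeval_X, Polynomial.aeval_C, Polynomial.algebraMap_eq]
    congr 1
    rw [Polynomial.C_sub]; ring
  have hfac : ∀ i, ∃ u : Polynomial K, u.coeff 0 ≠ 0 ∧
      Polynomial.aeval (Polynomial.X + Polynomial.C (x i)) P
        = Polynomial.X ^ (mm i - min (mm i) ℓ) * u := by
    intro i
    by_cases hi : ℓ < mm i
    · have hiS : i ∈ S := by simp [hS, hi]
      refine ⟨∏ j ∈ S.erase i, (Polynomial.X + Polynomial.C (x i - x j)) ^ (mm j - ℓ), ?_, ?_⟩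
      · rw [Polynomial.coeff_zero_eq_eval_zero, Polynomial.eval_prod]
        refine Finset.prod_ne_zero_iff.mpr fun j hj => ?_
        rw [Polynomial.eval_pow, Polynomial.eval_add, Polynomial.eval_X, Polynomial.eval_C,
          zero_add]
        refine pow_ne_zero _ (sub_ne_zero.mpr fun hxx => ?_)
        exact (Finset.mem_erase.mp hj).1 (hx hxx).symm
      · rw [hφP i, ← Finset.mul_prod_erase _ _ hiS]
        congr 1
        rw [sub_self, Polynomial.C_0, add_zero]
        congr 1
        omega
    · have h0 : mm i - min (mm i) ℓ = 0 := by omega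
      refine ⟨Polynomial.aeval (Polynomial.X + Polynomial.C (x i)) P, ?_,
        by rw [h0, pow_zero, one_mul]⟩
      rw [hφP i, Polynomial.coeff_zero_eq_eval_zero, Polynomial.eval_prod]
      refine Finset.prod_ne_zero_iff.mpr fun j hj => ?_
      rw [Polynomial.eval_pow, Polynomial.eval_add, Polynomial.eval_X, Polynomial.eval_C,
        zero_add]
      refine pow_ne_zero _ (sub_ne_zero.mpr fun hxx => ?_)
      have hj' : ℓ < mm j := by simpa [hS] using hj
      exact hi (by rw [hx hxx]; exact hj')
  have hcoeffmul : ∀ (i : Fin n) (Q' : MvPolynomial (Fin s) (Polynomial K)) (j : Fin s →₀ ℕ),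
      MvPolynomial.coeff j (shiftPoint (x i) (y i) (MvPolynomial.C P * Q'))
        = Polynomial.aeval (Polynomial.X + Polynomial.C (x i)) P *
            MvPolynomial.coeff j (shiftPoint (x i) (y i) Q') := by
    intro i Q' j
    rw [shiftPoint_eq, map_mul, shiftHom_C, ← shiftPoint_eq, MvPolynomial.coeff_C_mul]
  have hvan : ∀ (i : Fin n) (Q' : MvPolynomial (Fin s) (Polynomial K)),
      VanishesAt (MvPolynomial.C P * Q') (x i) (y i) (mm i)
        ↔ VanishesAt Q' (x i) (y i) (min (mm i) ℓ) := by
    intro i Q'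
    obtain ⟨u, hu, hPu⟩ := hfac i
    rw [vanishesAt_iff_dvd, vanishesAt_iff_dvd]
    have hexp : ∀ t : ℕ, (mm i - t) - (mm i - min (mm i) ℓ) = min (mm i) ℓ - t := by
      intro t; omega
    constructor <;> intro H j
    · have h1 := H j
      rw [hcoeffmul, hPu, X_pow_dvd_mul_iff u _ hu, hexp] at h1
      exact h1
    · rw [hcoeffmul, hPu, X_pow_dvd_mul_iff u _ hu, hexp]
      exact H j
  have hdvd : ∀ Q : MvPolynomial (Fin s) (Polynomial K), IsSolution ℓ mm b k x y Q →
      MvPolynomial.C P ∣ Q := by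
    rintro Q ⟨hQ0, hdegY, hw, hvanQ⟩
    rw [MvPolynomial.C_dvd_iff_dvd_coeff]
    intro jm
    rw [hPdef]
    refine Finset.prod_dvd_of_coprime ?_ fun i hi => ?_
    · intro a ha b' hb' hab
      exact ((Polynomial.pairwise_coprime_X_sub_C hx) hab).pow
    · have key : MvPolynomial.C ((Polynomial.X - Polynomial.C (x i)) ^ (mm i - ℓ)) ∣ Q := by
        rw [C_dvd_shift_iff (x i) (y i), MvPolynomial.C_dvd_iff_dvd_coeff]
        intro j
        by_cases hj : MvPolynomial.coeff j (shiftPoint (x i) (y i) Q) = 0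
        · simp [hj]
        · have h1 := MvPolynomial.le_totalDegree (MvPolynomial.mem_support_iff.mpr hj)
          have h2 := totalDegree_shiftPoint_le (x i) (y i) Q
          have h3 : Q.totalDegree ≤ ℓ := by
            rw [MvPolynomial.totalDegree]
            exact Finset.sup_le fun j' hj' => hdegY j' (MvPolynomial.mem_support_iff.mp hj')
          have h4 := (vanishesAt_iff_dvd Q (x i) (y i) (mm i)).mp (hvanQ i) j
          exact dvd_trans (pow_dvd_pow _ (by omega)) h4
      exact (MvPolynomial.C_dvd_iff_dvd_coeff _ _).mp key jm
  refine ⟨hdvd, fun Q => ⟨?_, ?_⟩⟩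
  · intro hsol
    obtain ⟨Q', rfl⟩ := hdvd Q hsol
    obtain ⟨hQ0, hdegY, hw, hvanQ⟩ := hsol
    refine ⟨Q', ⟨?_, ?_, ?_, ?_⟩, rfl⟩
    · rintro rfl; exact hQ0 (mul_zero _)
    · intro j hj
      exact hdegY j (by rw [MvPolynomial.coeff_C_mul]; exact mul_ne_zero hPne hj)
    · intro j hj
      have h5 := hw j (by rw [MvPolynomial.coeff_C_mul]; exact mul_ne_zero hPne hj)
      rw [MvPolynomial.coeff_C_mul, Polynomial.natDegree_mul hPne hj] at h5
      push_cast at h5 ⊢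
      linarith
    · intro i
      exact (hvan i Q').mp (hvanQ i)
  · rintro ⟨Q', ⟨hQ0, hdegY, hw, hvanQ⟩, rfl⟩
    refine ⟨mul_ne_zero hCPne hQ0, ?_, ?_, ?_⟩
    · intro j hj
      rw [MvPolynomial.coeff_C_mul] at hj
      exact hdegY j (right_ne_zero_of_mul hj)
    · intro j hj
      rw [MvPolynomial.coeff_C_mul] at hj
      have hj' := right_ne_zero_of_mul hj
      have h5 := hw j hj'
      rw [MvPolynomial.coeff_C_mul, Polynomial.natDegree_mul hPne hj']
      push_cast
      push_cast at h5
      linarith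
    · intro i
      exact (hvan i Q').mpr (hvanQ i)
end

section
/- Let K be a field and consider Problem MultivariateInterpolation with parameters s, ℓ, n, m_1,...,m_n, b, k_1,...,k_s and points with pairwise distinct x-coordinates x_1,...,x_n. Suppose k_j ≥ n for all j = 1,...,s. Let P = Π_{1 ≤ i ≤ n} (X - x_i)^{m_i} and d = deg(P) = Σ_i m_i. If b ≤ d then the problem has no solution; if b > d then P (viewed as an element of K[X, Y_1,...,Y_s] not involving the Y variables) is a solution. -/
/-- Auxiliary notion: `p` has all monomials of total degree ≤ `N`, a unique monomial
of total degree exactly `N`, namely `t₀`, and its coefficient is `1`. -/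
def TopAt {σ : Type*} {R : Type*} [CommRing R] (p : MvPolynomial σ R) (N : ℕ)
    (t₀ : σ →₀ ℕ) : Prop :=
  (t₀.sum fun _ e => e) = N ∧
  (∀ t, MvPolynomial.coeff t p ≠ 0 → (t.sum fun _ e => e) ≤ N) ∧
  (∀ t, MvPolynomial.coeff t p ≠ 0 → (t.sum fun _ e => e) = N → t = t₀) ∧
  MvPolynomial.coeff t₀ p = 1

theorem TopAt.one {σ : Type*} {R : Type*} [CommRing R] [Nontrivial R] :
    TopAt (1 : MvPolynomial σ R) 0 0 := by
  classical
  refine ⟨by simp, ?_, ?_, by simp⟩ <;> intro t ht <;>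
  · rw [MvPolynomial.coeff_one] at ht
    by_cases h : (0 : σ →₀ ℕ) = t
    · simp [← h]
    · simp [h] at ht

theorem TopAt.mul {σ : Type*} {R : Type*} [CommRing R] {p q : MvPolynomial σ R}
    {N₁ N₂ : ℕ} {t₁ t₂ : σ →₀ ℕ} (hp : TopAt p N₁ t₁) (hq : TopAt q N₂ t₂) :
    TopAt (p * q) (N₁ + N₂) (t₁ + t₂) := by
  classical
  obtain ⟨hd1, hb1, hu1, hc1⟩ := hp
  obtain ⟨hd2, hb2, hu2, hc2⟩ := hq
  have hsum : ∀ a b : σ →₀ ℕ, ((a + b).sum fun _ e => e)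
      = (a.sum fun _ e => e) + (b.sum fun _ e => e) := by
    intro a b; exact Finsupp.sum_add_index' (fun _ => rfl) (fun _ _ _ => rfl)
  refine ⟨by rw [hsum, hd1, hd2], ?_, ?_, ?_⟩
  · intro t ht
    rw [MvPolynomial.coeff_mul] at ht
    obtain ⟨⟨a, b⟩, hab, hne⟩ := Finset.exists_ne_zero_of_sum_ne_zero ht
    rw [Finset.HasAntidiagonal.mem_antidiagonal] at hab
    have h1 : MvPolynomial.coeff a p ≠ 0 := fun h => hne (by simp [h])
    have h2 : MvPolynomial.coeff b q ≠ 0 := fun h => hne (by simp [h])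
    calc (t.sum fun _ e => e) = (a.sum fun _ e => e) + (b.sum fun _ e => e) := by
          rw [← hab, hsum]
      _ ≤ N₁ + N₂ := add_le_add (hb1 a h1) (hb2 b h2)
  · intro t ht htop
    rw [MvPolynomial.coeff_mul] at ht
    obtain ⟨⟨a, b⟩, hab, hne⟩ := Finset.exists_ne_zero_of_sum_ne_zero ht
    rw [Finset.HasAntidiagonal.mem_antidiagonal] at hab
    have h1 : MvPolynomial.coeff a p ≠ 0 := fun h => hne (by simp [h])
    have h2 : MvPolynomial.coeff b q ≠ 0 := fun h => hne (by simp [h])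
    have hs : (a.sum fun _ e => e) + (b.sum fun _ e => e) = N₁ + N₂ := by
      rw [← hsum, hab, htop]
    have ha : (a.sum fun _ e => e) = N₁ :=
      le_antisymm (hb1 a h1) (by have := hb2 b h2; omega)
    have hb : (b.sum fun _ e => e) = N₂ := by have := hb1 a h1; omega
    rw [← hab, hu1 a h1 ha, hu2 b h2 hb]
  · rw [MvPolynomial.coeff_mul]
    have hmem : ((t₁ : σ →₀ ℕ), (t₂ : σ →₀ ℕ)) ∈ Finset.HasAntidiagonal.antidiagonal (t₁ + t₂) := by
      rw [Finset.HasAntidiagonal.mem_antidiagonal]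
    rw [Finset.sum_eq_single_of_mem _ hmem]
    · rw [hc1, hc2, one_mul]
    · rintro ⟨a, b⟩ hab hne
      rw [Finset.HasAntidiagonal.mem_antidiagonal] at hab
      by_contra h
      have h1 : MvPolynomial.coeff a p ≠ 0 := fun hz => h (by simp [hz])
      have h2 : MvPolynomial.coeff b q ≠ 0 := fun hz => h (by simp [hz])
      have hab' : a + b = t₁ + t₂ := hab
      have hsab : (a.sum fun _ e => e) + (b.sum fun _ e => e) = N₁ + N₂ := by
        rw [← hsum, hab', hsum, hd1, hd2]
      have ha : (a.sum fun _ e => e) = N₁ :=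
        le_antisymm (hb1 a h1) (by have := hb2 b h2; omega)
      have hb : (b.sum fun _ e => e) = N₂ := by have := hb1 a h1; omega
      exact hne (by rw [hu1 a h1 ha, hu2 b h2 hb])

theorem TopAt.linear {σ : Type*} {R : Type*} [CommRing R] [Nontrivial R] (kk : σ) (c : R) :
    TopAt (MvPolynomial.X kk + MvPolynomial.C c) 1 (Finsupp.single kk 1) := by
  classical
  have hne : Finsupp.single kk 1 ≠ (0 : σ →₀ ℕ) := by simp
  refine ⟨by simp, ?_, ?_, ?_⟩
  · intro t ht
    rw [MvPolynomial.coeff_add, MvPolynomial.coeff_X', MvPolynomial.coeff_C] at ht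
    by_cases h1 : Finsupp.single kk 1 = t
    · simp [← h1]
    · by_cases h2 : (0 : σ →₀ ℕ) = t
      · simp [← h2]
      · simp [h1, h2] at ht
  · intro t ht htop
    rw [MvPolynomial.coeff_add, MvPolynomial.coeff_X', MvPolynomial.coeff_C] at ht
    by_cases h1 : Finsupp.single kk 1 = t
    · exact h1.symm
    · by_cases h2 : (0 : σ →₀ ℕ) = t
      · rw [← h2] at htop; simp at htop
      · simp [h1, h2] at ht
  · rw [MvPolynomial.coeff_add, MvPolynomial.coeff_X', MvPolynomial.coeff_C,
      if_pos rfl, if_neg (Ne.symm hne), add_zero]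

theorem TopAt.pow {σ : Type*} {R : Type*} [CommRing R] [Nontrivial R] (kk : σ) (c : R)
    (e : ℕ) : TopAt ((MvPolynomial.X kk + MvPolynomial.C c) ^ e) e (Finsupp.single kk e) := by
  induction e with
  | zero => simpa using TopAt.one
  | succ e ih =>
      have := ih.mul (TopAt.linear kk c)
      rw [← pow_succ, ← Finsupp.single_add] at this
      exact this

theorem TopAt.prod {σ : Type*} {R : Type*} [CommRing R] [Nontrivial R] (c : σ → R)
    (d : σ →₀ ℕ) (S : Finset σ) :
    TopAt (∏ kk ∈ S, (MvPolynomial.X kk + MvPolynomial.C (c kk)) ^ d kk)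
      (∑ kk ∈ S, d kk) (∑ kk ∈ S, Finsupp.single kk (d kk)) := by
  classical
  induction S using Finset.cons_induction with
  | empty => simpa using TopAt.one
  | cons a S ha ih =>
      rw [Finset.prod_cons, Finset.sum_cons, Finset.sum_cons]
      exact (TopAt.pow a (c a) (d a)).mul ih

theorem coeff_shiftPoint_top {K : Type*} [Field K] {s : ℕ} (x : K) (y : Fin s → K)
    (Q : MvPolynomial (Fin s) (Polynomial K)) (j : Fin s →₀ ℕ)
    (hj : ∀ j', MvPolynomial.coeff j' Q ≠ 0 →
      (j'.sum fun _ e => e) ≤ (j.sum fun _ e => e)) :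
    MvPolynomial.coeff j (shiftPoint x y Q)
      = Polynomial.aeval (Polynomial.X + Polynomial.C x) (MvPolynomial.coeff j Q) := by
  classical
  rw [shiftPoint, MvPolynomial.eval₂_eq, MvPolynomial.coeff_sum]
  have key : ∀ d : Fin s →₀ ℕ,
      MvPolynomial.coeff j
        (((MvPolynomial.C).comp
            (Polynomial.aeval (Polynomial.X + Polynomial.C x)).toRingHom)
          (MvPolynomial.coeff d Q) *
          ∏ i ∈ d.support,
            (MvPolynomial.X i + MvPolynomial.C (Polynomial.C (y i))) ^ d i)
      = Polynomial.aeval (Polynomial.X + Polynomial.C x) (MvPolynomial.coeff d Q) *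
          MvPolynomial.coeff j
            (∏ i ∈ d.support,
              (MvPolynomial.X i + MvPolynomial.C (Polynomial.C (y i))) ^ d i) := by
    intro d
    rw [RingHom.comp_apply]
    exact MvPolynomial.coeff_C_mul _ _ _
  have hsingle : ∀ d : Fin s →₀ ℕ,
      (∑ kk ∈ d.support, Finsupp.single kk (d kk)) = d := fun d => Finsupp.sum_single d
  have hsumd : ∀ d : Fin s →₀ ℕ, (∑ kk ∈ d.support, d kk) = (d.sum fun _ e => e) :=
    fun d => rfl
  rw [Finset.sum_eq_single j]
  · rw [key]
    obtain ⟨_, _, _, hc⟩ := TopAt.prod (fun i => Polynomial.C (y i)) j j.support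
    rw [hsingle] at hc
    rw [hc, mul_one]
  · intro d hd hne
    rw [key]
    obtain ⟨_, hb, hu, _⟩ := TopAt.prod (fun i => Polynomial.C (y i)) d d.support
    rw [hsingle] at hu
    rw [hsumd] at hb hu
    by_cases hz : MvPolynomial.coeff j
        (∏ i ∈ d.support,
          (MvPolynomial.X i + MvPolynomial.C (Polynomial.C (y i))) ^ d i) = 0
    · rw [hz, mul_zero]
    · have h1 : (j.sum fun _ e => e) ≤ (d.sum fun _ e => e) := hb j hz
      have h2 : (d.sum fun _ e => e) ≤ (j.sum fun _ e => e) :=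
        hj d (MvPolynomial.mem_support_iff.mp hd)
      exact absurd (hu j hz (le_antisymm h1 h2)) (fun h => hne (h ▸ rfl))
  · intro hj'
    rw [key, MvPolynomial.notMem_support_iff.mp hj', map_zero, zero_mul]

open Polynomial in
theorem shift_unshift {K : Type*} [Field K] (x : K) (p : K[X]) :
    Polynomial.aeval (X - C x) (Polynomial.aeval (X + C x) p) = p := by
  have h1 : ∀ (r : K) (q : K[X]), (Polynomial.aeval (X + C r)) q = Polynomial.taylor r q := by
    intro r q
    rw [Polynomial.taylor_apply, Polynomial.comp, Polynomial.aeval_def,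
      Polynomial.eval₂_eq_eval_map, Polynomial.eval₂_eq_eval_map]
    simp
  have h2 : (X : K[X]) - C x = X + C (-x) := by rw [map_neg, sub_eq_add_neg]
  rw [h2, h1, h1, Polynomial.taylor_taylor]
  simp

open Polynomial in
theorem dvd_of_shift_coeff_eq_zero {K : Type*} [Field K] (x : K) (p : K[X]) (e : ℕ)
    (h : ∀ h' < e, (Polynomial.aeval (X + C x) p).coeff h' = 0) :
    (X - C x) ^ e ∣ p := by
  have hdvd : (X : K[X]) ^ e ∣ Polynomial.aeval (X + C x) p := X_pow_dvd_iff.mpr h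
  have := map_dvd (Polynomial.aeval (X - C x) : K[X] →ₐ[K] K[X]) hdvd
  rwa [map_pow, Polynomial.aeval_X, shift_unshift] at this

/-- When all weights satisfy `k_j ≥ n`: with `P = Π_i (X - x_i)^{m_i}` and
`d = Σ_i m_i = deg P`, if `b ≤ d` then Problem MultivariateInterpolation has no
solution, and if `b > d` then `P` (viewed in `K[X,Y_1,...,Y_s]`) is a
solution. -/
theorem large_weights_solution {K : Type*} [Field K] {s n : ℕ} (ℓ : ℕ) (hℓ : 0 < ℓ)
    (mm : Fin n → ℕ) (hmm : ∀ i, 0 < mm i) (b : ℤ) (k : Fin s → ℤ)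
    (hk : ∀ j, (n : ℤ) ≤ k j)
    (x : Fin n → K) (hx : Function.Injective x) (y : Fin n → Fin s → K) :
    (b ≤ ∑ i, (mm i : ℤ) →
        ¬ ∃ Q : MvPolynomial (Fin s) (Polynomial K), IsSolution ℓ mm b k x y Q) ∧
    (∑ i, (mm i : ℤ) < b →
        IsSolution ℓ mm b k x y
          (MvPolynomial.C (∏ i, (Polynomial.X - Polynomial.C (x i)) ^ mm i))) := by
  classical
  constructor
  · -- no solution when b ≤ d
    rintro hb ⟨Q, hQ0, hdegY, hwdeg, hvan⟩
    have hsupp : Q.support.Nonempty := by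
      rw [Finset.nonempty_iff_ne_empty]
      intro h
      exact hQ0 (MvPolynomial.support_eq_empty.mp h)
    obtain ⟨j, hjmem, hjmax⟩ :=
      Q.support.exists_max_image (fun t => t.sum fun _ e => e) hsupp
    set L := j.sum fun _ e => e with hL
    have hQj : MvPolynomial.coeff j Q ≠ 0 := MvPolynomial.mem_support_iff.mp hjmem
    have hmax' : ∀ j', MvPolynomial.coeff j' Q ≠ 0 →
        (j'.sum fun _ e => e) ≤ L := fun j' h =>
      hjmax j' (MvPolynomial.mem_support_iff.mpr h)
    -- each (X - x_i)^(mm i - L) divides coeff j Q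
    have hdvd : ∀ i : Fin n,
        (Polynomial.X - Polynomial.C (x i)) ^ (mm i - L) ∣ MvPolynomial.coeff j Q := by
      intro i
      apply dvd_of_shift_coeff_eq_zero
      intro h' hh'
      have hv := hvan i j h' (by omega)
      rwa [coeff_shiftPoint_top (x i) (y i) Q j hmax'] at hv
    have hprod : (∏ i, (Polynomial.X - Polynomial.C (x i)) ^ (mm i - L))
        ∣ MvPolynomial.coeff j Q := by
      apply Finset.prod_dvd_of_coprime
      · intro a _ c _ hac
        exact ((Polynomial.pairwise_coprime_X_sub_C hx) hac).pow
      · exact fun i _ => hdvd i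
    have hdegprod : (∏ i, (Polynomial.X - Polynomial.C (x i)) ^ (mm i - L)).natDegree
        = ∑ i, (mm i - L) := by
      rw [Polynomial.natDegree_prod]
      · exact Finset.sum_congr rfl fun i _ => by
          rw [Polynomial.natDegree_pow, Polynomial.natDegree_X_sub_C, mul_one]
      · exact fun i _ => pow_ne_zero _ (Polynomial.X_sub_C_ne_zero (x i))
    have hnatdeg : (∑ i, (mm i - L)) ≤ (MvPolynomial.coeff j Q).natDegree := by
      rw [← hdegprod]
      exact Polynomial.natDegree_le_of_dvd hprod hQj
    have hwd := hwdeg j hQj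
    -- weighted sum lower bound
    have hLsum : (L : ℤ) = ∑ r, (j r : ℤ) := by
      have : L = ∑ r, j r := Finsupp.sum_fintype _ _ (fun _ => rfl)
      rw [this]; push_cast; ring
    have hsum_jk : (L : ℤ) * n ≤ ∑ r, (j r : ℤ) * k r := by
      calc (L : ℤ) * n = ∑ r, (j r : ℤ) * n := by rw [hLsum, Finset.sum_mul]
        _ ≤ ∑ r, (j r : ℤ) * k r :=
            Finset.sum_le_sum fun r _ =>
              mul_le_mul_of_nonneg_left (hk r) (by positivity)
    have hcast : (∑ i, (mm i - L : ℕ) : ℤ) ≤ ((MvPolynomial.coeff j Q).natDegree : ℤ) := by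
      exact_mod_cast hnatdeg
    have hper : ∀ i : Fin n, (mm i : ℤ) ≤ ((mm i - L : ℕ) : ℤ) + (L : ℤ) := by
      intro i; omega
    have hsum_mm : ∑ i, (mm i : ℤ) ≤ (∑ i, ((mm i - L : ℕ) : ℤ)) + (n : ℤ) * (L : ℤ) := by
      calc ∑ i, (mm i : ℤ) ≤ ∑ i, (((mm i - L : ℕ) : ℤ) + (L : ℤ)) :=
            Finset.sum_le_sum fun i _ => hper i
        _ = (∑ i, ((mm i - L : ℕ) : ℤ)) + (n : ℤ) * (L : ℤ) := by
            rw [Finset.sum_add_distrib, Finset.sum_const, Finset.card_univ,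
              Fintype.card_fin, nsmul_eq_mul]
    have hcast2 : (∑ i, (mm i - L : ℕ) : ℤ) = ∑ i, ((mm i - L : ℕ) : ℤ) := by push_cast; rfl
    have hLN : (n : ℤ) * (L : ℤ) = (L : ℤ) * n := mul_comm _ _
    linarith [hsum_jk, hwd, hb, hcast, hsum_mm]
  · -- P is a solution when d < b
    intro hb
    set p : Polynomial K := ∏ i, (Polynomial.X - Polynomial.C (x i)) ^ mm i with hp
    have hfac : ∀ i : Fin n,
        (Polynomial.X - Polynomial.C (x i)) ^ mm i ≠ 0 :=
      fun i => pow_ne_zero _ (Polynomial.X_sub_C_ne_zero (x i))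
    have hpne : p ≠ 0 := Finset.prod_ne_zero_iff.mpr fun i _ => hfac i
    have hpdeg : p.natDegree = ∑ i, mm i := by
      rw [hp, Polynomial.natDegree_prod _ _ fun i _ => hfac i]
      exact Finset.sum_congr rfl fun i _ => by
        rw [Polynomial.natDegree_pow, Polynomial.natDegree_X_sub_C, mul_one]
    refine ⟨?_, ?_, ?_, ?_⟩
    · rw [ne_eq, MvPolynomial.C_eq_zero]
      exact hpne
    · intro j hj
      rw [MvPolynomial.coeff_C] at hj
      by_cases h : (0 : Fin s →₀ ℕ) = j
      · rw [← h]; simp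
      · simp [h] at hj
    · intro j hj
      rw [MvPolynomial.coeff_C] at hj ⊢
      by_cases h : (0 : Fin s →₀ ℕ) = j
      · rw [if_pos h, ← h]
        simp only [Finsupp.coe_zero, Pi.zero_apply, Nat.cast_zero, zero_mul,
          Finset.sum_const_zero, add_zero]
        rw [hpdeg]
        calc ((∑ i, mm i : ℕ) : ℤ) = ∑ i, (mm i : ℤ) := by push_cast; rfl
          _ < b := hb
      · rw [if_neg h] at hj
        exact absurd rfl hj
    · intro i j h hlt
      have hshift : shiftPoint (x i) (y i) (MvPolynomial.C p)
          = MvPolynomial.C (Polynomial.aeval (Polynomial.X + Polynomial.C (x i)) p) := by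
        rw [shiftPoint, MvPolynomial.eval₂_C, RingHom.comp_apply]
        rfl
      rw [hshift, MvPolynomial.coeff_C]
      by_cases hj : (0 : Fin s →₀ ℕ) = j
      · rw [if_pos hj]
        have hXdvd : (Polynomial.X : Polynomial K) ^ mm i
            ∣ Polynomial.aeval (Polynomial.X + Polynomial.C (x i)) p := by
          have hd : (Polynomial.X - Polynomial.C (x i)) ^ mm i ∣ p :=
            Finset.dvd_prod_of_mem _ (Finset.mem_univ i)
          have := map_dvd (Polynomial.aeval (Polynomial.X + Polynomial.C (x i)) :
            Polynomial K →ₐ[K] Polynomial K) hd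
          rw [map_pow, map_sub, Polynomial.aeval_X, Polynomial.aeval_C] at this
          simpa using this
        apply Polynomial.X_pow_dvd_iff.mp hXdvd
        have : (j.sum fun _ e => e) = 0 := by rw [← hj]; simp
        omega
      · rw [if_neg hj, Polynomial.coeff_zero]
end

section
/- Let K be a field, Q ∈ K[X, Y_1,...,Y_s] a nonzero solution of Problem MultivariateInterpolation with pairwise distinct x_1,...,x_n, multiplicities m_1,...,m_n, weights k_j ≥ n for all j, list-size ℓ, and weighted-degree bound b. Then b > Σ_{1≤i≤n} m_i. -/
open scoped BigOperators


/-- If `Q` is a nonzero solution of Problem MultivariateInterpolation with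
pairwise distinct `x_i` and all weights `k_j ≥ n`, then `b > Σ_i m_i`. -/

lemma degree_add' {σ : Type*} (a b : σ →₀ ℕ) :
    ((a + b).sum fun _ e => e) = (a.sum fun _ e => e) + b.sum fun _ e => e :=
  Finsupp.sum_add_index' (fun _ => rfl) (fun _ _ _ => rfl)

lemma coeff_eval₂_monomial {R σ : Type*} [CommRing R] [DecidableEq σ] (c : σ → R) :
    ∀ (N : ℕ) (j' : σ →₀ ℕ), (j'.sum fun _ e => e) = N → ∀ (a : R) (j : σ →₀ ℕ),
      (j'.sum fun _ e => e) ≤ (j.sum fun _ e => e) →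
      MvPolynomial.coeff j (MvPolynomial.eval₂ MvPolynomial.C
        (fun k => MvPolynomial.X k + MvPolynomial.C (c k)) (MvPolynomial.monomial j' a))
        = MvPolynomial.coeff j (MvPolynomial.monomial j' a) := by
  intro N
  induction N with
  | zero =>
    intro j' hj' a j _
    have : j' = 0 := by
      ext i
      by_contra hi
      have hi' : i ∈ j'.support := Finsupp.mem_support_iff.mpr hi
      have := Finset.sum_eq_zero_iff.mp hj' i hi'
      exact hi this
    subst this
    simp [MvPolynomial.eval₂_monomial]
  | succ N ih =>
    intro j' hj' a j hle
    -- pick i in support of j'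
    have hne : j' ≠ 0 := by
      intro h; rw [h] at hj'; simp at hj'
    obtain ⟨i, hi⟩ := Finsupp.support_nonempty_iff.mpr hne
    have hi1 : 1 ≤ j' i := Nat.one_le_iff_ne_zero.mpr (Finsupp.mem_support_iff.mp hi)
    set t := j' - Finsupp.single i 1 with ht
    have hsplit : Finsupp.single i 1 + t = j' := by
      rw [ht, add_tsub_cancel_of_le (Finsupp.single_le_iff.mpr hi1)]
    have hdt : (t.sum fun _ e => e) = N := by
      have := degree_add' (Finsupp.single i 1) t
      rw [hsplit, hj'] at this
      simp [Finsupp.sum_single_index] at this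
      omega
    have key : MvPolynomial.eval₂ MvPolynomial.C
        (fun k => MvPolynomial.X k + MvPolynomial.C (c k)) (MvPolynomial.monomial j' a)
        = (MvPolynomial.X i + MvPolynomial.C (c i)) *
          MvPolynomial.eval₂ MvPolynomial.C
            (fun k => MvPolynomial.X k + MvPolynomial.C (c k)) (MvPolynomial.monomial t a) := by
      rw [← hsplit, MvPolynomial.monomial_single_add, pow_one, MvPolynomial.eval₂_mul, MvPolynomial.eval₂_X]
    rw [key, add_mul, MvPolynomial.coeff_add]
    have hNj : N + 1 ≤ j.sum fun _ e => e := hj' ▸ hle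
    have h2 : MvPolynomial.coeff j (MvPolynomial.C (c i) *
        MvPolynomial.eval₂ MvPolynomial.C
          (fun k => MvPolynomial.X k + MvPolynomial.C (c k)) (MvPolynomial.monomial t a)) = 0 := by
      rw [MvPolynomial.coeff_C_mul, ih t hdt a j (by omega), MvPolynomial.coeff_monomial, if_neg, mul_zero]
      intro h; rw [h] at hdt; omega
    rw [h2, add_zero, mul_comm, MvPolynomial.coeff_mul_X']
    by_cases hij : i ∈ j.support
    · rw [if_pos hij]
      have hji1 : 1 ≤ j i := Nat.one_le_iff_ne_zero.mpr (Finsupp.mem_support_iff.mp hij)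
      have hdsub : ((j - Finsupp.single i 1).sum fun _ e => e) + 1 = j.sum fun _ e => e := by
        have hs : Finsupp.single i 1 + (j - Finsupp.single i 1) = j :=
          add_tsub_cancel_of_le (Finsupp.single_le_iff.mpr hji1)
        have := degree_add' (Finsupp.single i 1) (j - Finsupp.single i 1)
        rw [hs] at this
        simp [Finsupp.sum_single_index] at this
        omega
      rw [ih t hdt a (j - Finsupp.single i 1) (by omega), MvPolynomial.coeff_monomial, MvPolynomial.coeff_monomial]
      have hs : Finsupp.single i 1 + (j - Finsupp.single i 1) = j :=
        add_tsub_cancel_of_le (Finsupp.single_le_iff.mpr hji1)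
      have hiff : (t = j - Finsupp.single i 1) ↔ (j' = j) := by
        constructor
        · intro h; rw [← hsplit, h, hs]
        · intro h; rw [ht, h]
      simp only [hiff]
    · rw [if_neg hij, MvPolynomial.coeff_monomial, if_neg, eq_comm]
      intro h
      apply hij
      rw [← h, ← hsplit]
      simp [Finsupp.mem_support_iff]

lemma coeff_shiftY_s14 {R σ : Type*} [CommRing R] [DecidableEq σ] (c : σ → R)
    (P : MvPolynomial σ R) (j : σ →₀ ℕ)
    (hj : ∀ j' ∈ P.support, (j'.sum fun _ e => e) ≤ j.sum fun _ e => e) :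
    MvPolynomial.coeff j (MvPolynomial.eval₂ MvPolynomial.C
      (fun k => MvPolynomial.X k + MvPolynomial.C (c k)) P) = MvPolynomial.coeff j P := by
  have hsum : MvPolynomial.eval₂ MvPolynomial.C
      (fun k => MvPolynomial.X k + MvPolynomial.C (c k)) P
      = ∑ j' ∈ P.support, MvPolynomial.eval₂ MvPolynomial.C
          (fun k => MvPolynomial.X k + MvPolynomial.C (c k))
          (MvPolynomial.monomial j' (MvPolynomial.coeff j' P)) := by
    conv_lhs => rw [P.as_sum]
    exact map_sum (MvPolynomial.eval₂Hom MvPolynomial.C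
      (fun k => MvPolynomial.X k + MvPolynomial.C (c k))) _ _
  rw [hsum, MvPolynomial.coeff_sum,
    Finset.sum_congr rfl fun j' hj' =>
      coeff_eval₂_monomial c _ j' rfl (MvPolynomial.coeff j' P) j (hj j' hj'),
    ← MvPolynomial.coeff_sum, ← P.as_sum]

/-- main -/
theorem bound_gt_sum_of_multiplicities {K : Type*} [Field K] {s n : ℕ}
    (ℓ : ℕ) (hℓ : 0 < ℓ) (mm : Fin n → ℕ) (hmm : ∀ i, 0 < mm i)
    (b : ℤ) (k : Fin s → ℤ) (hk : ∀ j, (n : ℤ) ≤ k j)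
    (x : Fin n → K) (hx : Function.Injective x) (y : Fin n → Fin s → K)
    (Q : MvPolynomial (Fin s) (Polynomial K))
    (hQ : IsSolution ℓ mm b k x y Q) :
    ∑ i, (mm i : ℤ) < b := by
  classical
  obtain ⟨hQ0, hdegY, hwdeg, hvan⟩ := hQ
  have hsupp : Q.support.Nonempty := MvPolynomial.support_nonempty.mpr hQ0
  obtain ⟨j, hjmem, hjmax⟩ := Q.support.exists_max_image (fun j => j.sum fun _ e => e) hsupp
  set d : ℕ := j.sum fun _ e => e with hd
  set Qj := MvPolynomial.coeff j Q with hQj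
  have hQjne : Qj ≠ 0 := MvPolynomial.mem_support_iff.mp hjmem
  have hkey : ∀ i : Fin n, MvPolynomial.coeff j (shiftPoint (x i) (y i) Q) =
      Polynomial.taylor (x i) Qj := by
    intro i
    have hmapeq : shiftPoint (x i) (y i) Q =
        MvPolynomial.eval₂ MvPolynomial.C
          (fun r => MvPolynomial.X r + MvPolynomial.C (Polynomial.C (y i r)))
          (MvPolynomial.map (Polynomial.aeval (Polynomial.X + Polynomial.C (x i))).toRingHom Q) := by
      rw [MvPolynomial.eval₂_map]; rfl
    rw [hmapeq,
      coeff_shiftY_s14 _ _ _ (fun j' hj' => hjmax j' (MvPolynomial.support_map_subset _ _ hj')),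
      MvPolynomial.coeff_map]
    show Polynomial.aeval (Polynomial.X + Polynomial.C (x i)) Qj = _
    rw [Polynomial.taylor_apply, Polynomial.aeval_def, Polynomial.algebraMap_eq]
    rfl
  have hdvd : ∀ i : Fin n, (Polynomial.X - Polynomial.C (x i)) ^ (mm i - d) ∣ Qj := by
    intro i
    have h1 : Polynomial.X ^ (mm i - d) ∣ Polynomial.taylor (x i) Qj := by
      rw [Polynomial.X_pow_dvd_iff]
      intro h hh
      rw [← hkey i]
      exact hvan i j h (by omega)
    obtain ⟨u, hu⟩ := h1
    have h2 : Qj = Polynomial.taylor (-(x i)) (Polynomial.X ^ (mm i - d) * u) := by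
      rw [← hu, Polynomial.taylor_taylor, neg_add_cancel, Polynomial.taylor_zero]
    refine ⟨u.comp (Polynomial.X + Polynomial.C (-(x i))), ?_⟩
    rw [h2, Polynomial.taylor_apply, Polynomial.mul_comp, Polynomial.X_pow_comp,
      Polynomial.C_neg, ← sub_eq_add_neg]
  have hprod : (∏ i, (Polynomial.X - Polynomial.C (x i)) ^ (mm i - d)) ∣ Qj := by
    refine Fintype.prod_dvd_of_coprime ?_ hdvd
    intro i i' hii'
    exact ((Polynomial.pairwise_coprime_X_sub_C hx) hii').pow
  have hdeg : ∑ i, (mm i - d) ≤ Qj.natDegree := by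
    have h3 := Polynomial.natDegree_le_of_dvd hprod hQjne
    rw [Polynomial.natDegree_prod _ _ (fun i _ =>
        pow_ne_zero _ (Polynomial.X_sub_C_ne_zero (x i)))] at h3
    simpa [Polynomial.natDegree_pow, Polynomial.natDegree_X_sub_C] using h3
  have hb := hwdeg j hQjne
  have hdz : (d : ℤ) = ∑ r, (j r : ℤ) := by
    rw [hd, Finsupp.sum_fintype _ _ (fun _ => rfl)]
    push_cast
    rfl
  have hkbound : (d : ℤ) * n ≤ ∑ r, (j r : ℤ) * k r := by
    calc (d : ℤ) * n = ∑ r, (j r : ℤ) * n := by rw [hdz, Finset.sum_mul]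
    _ ≤ ∑ r, (j r : ℤ) * k r :=
      Finset.sum_le_sum fun r _ => mul_le_mul_of_nonneg_left (hk r) (Int.natCast_nonneg _)
  have hdegz : (∑ i, (mm i : ℤ)) - (n : ℤ) * d ≤ (Qj.natDegree : ℤ) := by
    have h4 : (∑ i, ((mm i - d : ℕ) : ℤ)) ≤ (Qj.natDegree : ℤ) := by
      exact_mod_cast Nat.cast_le.mpr hdeg
    have h5 : (∑ i, (mm i : ℤ)) - (n : ℤ) * d ≤ ∑ i, ((mm i - d : ℕ) : ℤ) := by
      have : (∑ i, (mm i : ℤ)) - (n : ℤ) * d = ∑ i : Fin n, ((mm i : ℤ) - d) := by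
        rw [Finset.sum_sub_distrib, Finset.sum_const, Finset.card_univ, Fintype.card_fin,
          nsmul_eq_mul]
      rw [this]
      exact Finset.sum_le_sum fun i _ => by omega
    omega
  linarith
end
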